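/- arXiv:2308.07684 — 7 statements merged into one kernel-verified Lean document; each statement's English description precedes it below -/
import Mathlib

section
/- Let P be a path in K_n □ K_m given by start vertex v₀ and step array a = [a₁,...,a_ℓ], and let G = ⟨c⟩ with c(a,b)=(a+1,b), n odd. Then P contains at most one edge from each G-edge-orbit if and only if for all 0 ≤ i < j ≤ ℓ-1: (the second coordinate of a_{i+1}+...+a_j is nonzero, or a_{i+1} ≠ a_{j+1}) and (the second coordinate of a_{i+1}+...+a_{j+1} is nonzero, or a_{i+1} ≠ -a_{j+1}). -/
/-- The Cartesian product `K_n □ K_m` on vertex set `ZMod n × ZMod m`: distinct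
vertices are adjacent iff they agree in some coordinate. -/
def rook (n m : ℕ) : SimpleGraph (ZMod n × ZMod m) where
  Adj v w := v ≠ w ∧ (v.1 = w.1 ∨ v.2 = w.2)
  symm := by
    constructor
    rintro v w ⟨h1, h2⟩
    exact ⟨fun h => h1 h.symm, h2.imp Eq.symm Eq.symm⟩
  loopless := by constructor; rintro v ⟨h, -⟩; exact h rfl

/-- The translation `(a, b) ↦ (a + t, b)` on `ZMod n × ZMod m`. -/
def shift (n m : ℕ) (t : ZMod n) : ZMod n × ZMod m → ZMod n × ZMod m :=
  fun v => (v.1 + t, v.2)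

/-- The translation `shift n m t` as a graph homomorphism of `rook n m`. -/
def shiftHom (n m : ℕ) (t : ZMod n) : rook n m →g rook n m where
  toFun := shift n m t
  map_rel' := by
    rintro v w ⟨h1, h2⟩
    constructor
    · intro hc
      apply h1
      have ha := congrArg Prod.fst hc
      have hb := congrArg Prod.snd hc
      simp only [shift] at ha hb
      exact Prod.ext (by exact add_right_cancel ha) hb
    · rcases h2 with h | h
      · exact Or.inl (by simp [shift, h])
      · exact Or.inr (by simp [shift, h])

open Finset in
/-- Let `P` be a path in `K_n □ K_m` with start `v₀` and step array `a₁, …, a_ℓ`,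
and let `G` be the cyclic group generated by `(a,b) ↦ (a+1,b)`, `n` odd.  Then `P`
contains at most one edge from each `G`-edge-orbit iff for all `0 ≤ i < j ≤ ℓ-1`:
(the second coordinate of `a_{i+1}+⋯+a_j` is nonzero or `a_{i+1} ≠ a_{j+1}`) and
(the second coordinate of `a_{i+1}+⋯+a_{j+1}` is nonzero or `a_{i+1} ≠ -a_{j+1}`). -/
theorem path_one_edge_per_orbit_iff (n m ℓ : ℕ) (hn : Odd n)
    (v₀ : ZMod n × ZMod m) (a : ℕ → ZMod n × ZMod m)
    (ha : ∀ g, 1 ≤ g → g ≤ ℓ →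
      ((a g).2 = 0 ∧ (a g).1 ≠ 0) ∨ ((a g).1 = 0 ∧ (a g).2 ≠ 0))
    (hpath : ∀ i j, i ≤ ℓ → j ≤ ℓ →
      v₀ + ∑ g ∈ Icc 1 i, a g = v₀ + ∑ g ∈ Icc 1 j, a g → i = j) :
    (∀ i j, i < j → j < ℓ → ∀ t : ZMod n,
        Sym2.map (shift n m t)
            s(v₀ + ∑ g ∈ Icc 1 i, a g, v₀ + ∑ g ∈ Icc 1 (i + 1), a g) ≠
          s(v₀ + ∑ g ∈ Icc 1 j, a g, v₀ + ∑ g ∈ Icc 1 (j + 1), a g)) ↔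
    (∀ i j, i < j → j < ℓ →
        ((∑ g ∈ Icc (i + 1) j, a g).2 ≠ 0 ∨ a (i + 1) ≠ a (j + 1)) ∧
        ((∑ g ∈ Icc (i + 1) (j + 1), a g).2 ≠ 0 ∨ a (i + 1) ≠ -a (j + 1))) := by
  classical
  have key : ∀ i j : ℕ, i ≤ j →
      (∑ g ∈ Finset.Icc 1 j, a g) = (∑ g ∈ Finset.Icc 1 i, a g) + ∑ g ∈ Finset.Icc (i+1) j, a g := by
    intro i j h
    rw [(by exact Finset.Icc_add_one_left_eq_Ioc 0 j : Finset.Icc 1 j = Finset.Ioc 0 j),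
        (by exact Finset.Icc_add_one_left_eq_Ioc 0 i : Finset.Icc 1 i = Finset.Ioc 0 i),
        (Finset.Icc_add_one_left_eq_Ioc i j : Finset.Icc (i+1) j = Finset.Ioc i j)]
    exact (Finset.sum_Ioc_consecutive a (Nat.zero_le i) h).symm
  have hsucc : ∀ k : ℕ, (∑ g ∈ Finset.Icc 1 (k+1), a g) = (∑ g ∈ Finset.Icc 1 k, a g) + a (k+1) := by
    intro k
    exact Finset.sum_Icc_succ_top (Nat.succ_le_succ (Nat.zero_le k)) a
  constructor
  · intro H i j hij hj
    have hT : (∑ g ∈ Finset.Icc 1 j, a g) = (∑ g ∈ Finset.Icc 1 i, a g) + ∑ g ∈ Finset.Icc (i+1) j, a g :=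
      key i j hij.le
    have hU : (∑ g ∈ Finset.Icc 1 (j+1), a g) = (∑ g ∈ Finset.Icc 1 i, a g) + ∑ g ∈ Finset.Icc (i+1) (j+1), a g :=
      key i (j+1) (by omega)
    have hU2 : (∑ g ∈ Finset.Icc (i+1) (j+1), a g) = (∑ g ∈ Finset.Icc (i+1) j, a g) + a (j+1) := by
      have := hsucc j
      rw [hT, hU] at this
      exact add_left_cancel (by linear_combination this)
    constructor
    · by_contra hc
      push_neg at hc
      obtain ⟨h2, heq⟩ := hc
      apply H i j hij hj ((∑ g ∈ Finset.Icc (i+1) j, a g).1)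
      rw [Sym2.map_pair_eq, Sym2.eq_iff]
      left
      constructor
      · show ((v₀ + ∑ g ∈ Finset.Icc 1 i, a g).1 + _, (v₀ + ∑ g ∈ Finset.Icc 1 i, a g).2) = _
        refine Prod.ext ?_ ?_
        · simp [hT]; ring
        · simp [hT, h2]
      · show ((v₀ + ∑ g ∈ Finset.Icc 1 (i+1), a g).1 + _, (v₀ + ∑ g ∈ Finset.Icc 1 (i+1), a g).2) = _
        refine Prod.ext ?_ ?_
        · simp [hsucc i, hsucc j, hT, heq]; ring
        · simp [hsucc i, hsucc j, hT, h2, heq]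
    · by_contra hc
      push_neg at hc
      obtain ⟨h2, heq⟩ := hc
      apply H i j hij hj ((∑ g ∈ Finset.Icc (i+1) (j+1), a g).1)
      rw [Sym2.map_pair_eq, Sym2.eq_iff]
      right
      constructor
      · show ((v₀ + ∑ g ∈ Finset.Icc 1 i, a g).1 + _, (v₀ + ∑ g ∈ Finset.Icc 1 i, a g).2) = _
        refine Prod.ext ?_ ?_
        · simp [hU]; ring
        · simp [hU, h2]
      · show ((v₀ + ∑ g ∈ Finset.Icc 1 (i+1), a g).1 + _, (v₀ + ∑ g ∈ Finset.Icc 1 (i+1), a g).2) = _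
        refine Prod.ext ?_ ?_
        · have h1 : (a (i+1)).1 = (-a (j+1)).1 := congrArg Prod.fst heq
          have h2' : (∑ g ∈ Finset.Icc (i+1) (j+1), a g).1
              = (∑ g ∈ Finset.Icc (i+1) j, a g).1 + (a (j+1)).1 := congrArg Prod.fst hU2
          simp only [Prod.fst_neg] at h1
          simp [hsucc i, hT, h1, h2']
          ring
        · have h1 : (a (i+1)).2 = (-a (j+1)).2 := congrArg Prod.snd heq
          have h2'' : (∑ g ∈ Finset.Icc (i+1) (j+1), a g).2
              = (∑ g ∈ Finset.Icc (i+1) j, a g).2 + (a (j+1)).2 := congrArg Prod.snd hU2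
          simp only [Prod.snd_neg] at h1
          simp [hsucc i, hT]
          rw [h2''] at h2
          linear_combination h1 - h2
  · intro H i j hij hj t heq
    have hT : (∑ g ∈ Finset.Icc 1 j, a g) = (∑ g ∈ Finset.Icc 1 i, a g) + ∑ g ∈ Finset.Icc (i+1) j, a g :=
      key i j hij.le
    have hU : (∑ g ∈ Finset.Icc 1 (j+1), a g) = (∑ g ∈ Finset.Icc 1 i, a g) + ∑ g ∈ Finset.Icc (i+1) (j+1), a g :=
      key i (j+1) (by omega)
    have hU2 : (∑ g ∈ Finset.Icc (i+1) (j+1), a g) = (∑ g ∈ Finset.Icc (i+1) j, a g) + a (j+1) := by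
      have := hsucc j
      rw [hT, hU] at this
      exact add_left_cancel (by linear_combination this)
    obtain ⟨Hc1, Hc2⟩ := H i j hij hj
    rw [Sym2.map_pair_eq, Sym2.eq_iff] at heq
    rcases heq with ⟨e1, e2⟩ | ⟨e1, e2⟩
    · -- case 1: contradict Hc1
      simp only [shift, Prod.ext_iff] at e1 e2
      obtain ⟨e11, e12⟩ := e1
      obtain ⟨e21, e22⟩ := e2
      have hT1 := congrArg Prod.fst hT
      have hT2 := congrArg Prod.snd hT
      have hs1 := congrArg Prod.fst (hsucc i)
      have hs2 := congrArg Prod.snd (hsucc i)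
      have ht1 := congrArg Prod.fst (hsucc j)
      have ht2 := congrArg Prod.snd (hsucc j)
      simp only [Prod.fst_add, Prod.snd_add] at hT1 hT2 hs1 hs2 ht1 ht2 e11 e12 e21 e22
      have hsum2 : (∑ g ∈ Finset.Icc (i+1) j, a g).2 = 0 := by linear_combination (-e12) - hT2
      have haeq : a (i+1) = a (j+1) := by
        refine Prod.ext ?_ ?_
        · linear_combination e21 - e11 + ht1 - hs1
        · linear_combination e22 - e12 + ht2 - hs2
      rcases Hc1 with h | h
      · exact h hsum2
      · exact h haeq
    · -- case 2: contradict Hc2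
      simp only [shift, Prod.ext_iff] at e1 e2
      obtain ⟨e11, e12⟩ := e1
      obtain ⟨e21, e22⟩ := e2
      have hT1 := congrArg Prod.fst hT
      have hT2 := congrArg Prod.snd hT
      have hU1 := congrArg Prod.fst hU
      have hU2' := congrArg Prod.snd hU
      have hs1 := congrArg Prod.fst (hsucc i)
      have hs2 := congrArg Prod.snd (hsucc i)
      simp only [Prod.fst_add, Prod.snd_add] at hT1 hT2 hU1 hU2' hs1 hs2 e11 e12 e21 e22
      have hsum2 : (∑ g ∈ Finset.Icc (i+1) (j+1), a g).2 = 0 := by linear_combination (-e12) - hU2'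
      have hV1 := congrArg Prod.fst hU2
      have hV2 := congrArg Prod.snd hU2
      simp only [Prod.fst_add, Prod.snd_add] at hV1 hV2
      have haeq : a (i+1) = -a (j+1) := by
        refine Prod.ext ?_ ?_
        · simp only [Prod.fst_neg]
          linear_combination e21 - e11 - hs1 - hU1 + hT1 - hV1
        · simp only [Prod.snd_neg]
          linear_combination e22 - e12 - hs2 - hU2' + hT2 - hV2
      rcases Hc2 with h | h
      · exact h hsum2
      · exact h haeq
end

section
/- Let n be an odd prime and S_k (1 ≤ k ≤ (n-1)/2) be a stretch of the staircase array over Z_n × Z_n. Then for any 1 ≤ p ≤ q ≤ 2n, the sum of the consecutive entries a_{k,p} through a_{k,q} is nonzero in Z_n × Z_n (i.e., not equal to (0,0)). -/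
def stretchEntry (n k g : ℕ) : ZMod n × ZMod n :=
  if g = 2 * n then (((2 * k : ℕ) : ZMod n), 0)
  else if g % 2 = 1 then (0, ((2 * k - 1 : ℕ) : ZMod n))
  else (((2 * k - 1 : ℕ) : ZMod n), 0)

def staircase (n i : ℕ) : ZMod n × ZMod n :=
  stretchEntry n ((i - 1) / (2 * n) + 1) ((i - 1) % (2 * n) + 1)

open Finset

lemma stretch_prefix_sum (n k : ℕ) :
    ∀ j, j < 2 * n →
      ∑ g ∈ Ioc 0 j, stretchEntry n k g
        = (((j / 2 : ℕ) : ZMod n) * ((2 * k - 1 : ℕ) : ZMod n),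
           (((j + 1) / 2 : ℕ) : ZMod n) * ((2 * k - 1 : ℕ) : ZMod n)) := by
  intro j
  induction j with
  | zero => intro _; simp; rfl
  | succ j ih =>
    intro hj
    rw [Finset.sum_Ioc_succ_top (Nat.zero_le _), ih (by omega)]
    have hne : j + 1 ≠ 2 * n := by omega
    rcases Nat.even_or_odd j with he | hodd
    · have h1 : (j + 1) % 2 = 1 := by
        rcases he with ⟨t, ht⟩; omega
      have e1 : (j + 1) / 2 = j / 2 := by rcases he with ⟨t, ht⟩; omega
      have e2 : (j + 1 + 1) / 2 = (j + 1) / 2 + 1 := by rcases he with ⟨t, ht⟩; omega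
      have hent : stretchEntry n k (j + 1) = (0, ((2 * k - 1 : ℕ) : ZMod n)) := by
        simp [stretchEntry, hne, h1]
      rw [hent, e2, e1, Prod.mk_add_mk]
      simp only [Prod.mk.injEq, Nat.cast_add, Nat.cast_one]
      constructor <;> ring
    · have h1 : (j + 1) % 2 = 0 := by rcases hodd with ⟨t, ht⟩; omega
      have e1 : (j + 1) / 2 = j / 2 + 1 := by rcases hodd with ⟨t, ht⟩; omega
      have e2 : (j + 1 + 1) / 2 = (j + 1) / 2 := by rcases hodd with ⟨t, ht⟩; omega
      have hent : stretchEntry n k (j + 1) = (((2 * k - 1 : ℕ) : ZMod n), 0) := by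
        simp [stretchEntry, hne, h1]
      rw [hent, e2, e1, Prod.mk_add_mk]
      simp only [Prod.mk.injEq, Nat.cast_add, Nat.cast_one]
      constructor <;> ring

/-- For `n` an odd prime, `1 ≤ k ≤ (n-1)/2`, and `1 ≤ p ≤ q ≤ 2n`, the sum of the
consecutive entries `a_{k,p}` through `a_{k,q}` of the stretch `S_k` is nonzero in
`ZMod n × ZMod n`. -/
theorem partial_stretch_sum_ne_zero (n k p q : ℕ) (hn : n.Prime) (ho : Odd n)
    (hk1 : 1 ≤ k) (hk2 : k ≤ (n - 1) / 2)
    (hp : 1 ≤ p) (hpq : p ≤ q) (hq : q ≤ 2 * n) :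
    ∑ g ∈ Icc p q, stretchEntry n k g ≠ 0 := by
  haveI := Fact.mk hn
  have hodd : n % 2 = 1 := Nat.odd_iff.mp ho
  have hn2 := hn.two_le
  have hn3 : 3 ≤ n := by omega
  have h2k : 2 * k ≤ n - 1 := by omega
  set m : ZMod n := ((2 * k - 1 : ℕ) : ZMod n) with hm
  have hmne : m ≠ 0 := by
    intro h
    have hdvd := (ZMod.natCast_eq_zero_iff (2 * k - 1) n).mp (hm ▸ h)
    have := Nat.le_of_dvd (by omega) hdvd
    omega
  intro hsum
  have hIcc : Icc p q = Ioc (p - 1) q := by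
    ext x; simp only [mem_Icc, mem_Ioc]; omega
  have hdec := Finset.sum_Ioc_consecutive (stretchEntry n k)
    (Nat.zero_le (p - 1)) (le_trans (by omega) hpq : p - 1 ≤ q)
  rw [hIcc] at hsum
  rw [hsum, add_zero] at hdec
  -- hdec : Q (p-1) = Q q
  set a := p - 1 with ha
  have haq : a < q := by omega
  have haform := stretch_prefix_sum n k a (by omega)
  by_cases hq2n : q = 2 * n
  · -- Q q = (1, 0)
    have hq1 : q = (2 * n - 1) + 1 := by omega
    rw [hq1, Finset.sum_Ioc_succ_top (Nat.zero_le _),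
      stretch_prefix_sum n k (2 * n - 1) (by omega)] at hdec
    have e1 : (2 * n - 1) / 2 = n - 1 := by omega
    have e2 : (2 * n - 1 + 1) / 2 = n := by omega
    have hlast : stretchEntry n k (2 * n - 1 + 1) = (((2 * k : ℕ) : ZMod n), 0) := by
      simp [stretchEntry, show 2 * n - 1 + 1 = 2 * n by omega]
    rw [hlast, e1, e2] at hdec
    have hQ : (((n - 1 : ℕ) : ZMod n) * m + ((2 * k : ℕ) : ZMod n),
        ((n : ℕ) : ZMod n) * m + (0 : ZMod n)) = ((1 : ZMod n), (0 : ZMod n)) := by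
      have c1 : ((n - 1 : ℕ) : ZMod n) = -1 := by
        push_cast [Nat.cast_sub (by omega : 1 ≤ n)]
        simp
      have c2 : ((n : ℕ) : ZMod n) = 0 := ZMod.natCast_self n
      have c3 : m = 2 * (k : ZMod n) - 1 := by
        rw [hm, Nat.cast_sub (by omega : 1 ≤ 2 * k)]
        push_cast; ring
      have c4 : ((2 * k : ℕ) : ZMod n) = 2 * (k : ZMod n) := by push_cast; ring
      rw [c1, c2, c3, c4]
      simp only [Prod.mk.injEq]; constructor <;> ring
    rw [haform, Prod.mk_add_mk] at hdec
    rw [hQ] at hdec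
    obtain ⟨hd1, hd2⟩ := Prod.mk.injEq .. ▸ hdec
    -- hd2 : ((a+1)/2) * m = 0
    have hz : (((a + 1) / 2 : ℕ) : ZMod n) = 0 := by
      rcases mul_eq_zero.mp hd2 with h | h
      · exact h
      · exact absurd h hmne
    rw [ZMod.natCast_eq_zero_iff] at hz
    have hb : (a + 1) / 2 ≤ n := by omega
    have hcases : a = 0 ∨ a = 2 * n - 1 := by
      rcases Nat.eq_zero_or_pos ((a + 1) / 2) with h0 | hpos
      · left; omega
      · have := Nat.le_of_dvd hpos hz
        right; omega
    rcases hcases with h0 | h1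
    · rw [h0] at hd1
      simp at hd1
    · rw [h1] at hd1
      have e3 : (2 * n - 1) / 2 = n - 1 := by omega
      rw [e3] at hd1
      have c1 : ((n - 1 : ℕ) : ZMod n) = -1 := by
        push_cast [Nat.cast_sub (by omega : 1 ≤ n)]; simp
      rw [c1, neg_one_mul] at hd1
      -- hd1 : -m = 1, so m = -1, so (2k-1 : ZMod n) = (n-1 : ZMod n)
      have hmeq : m = ((n - 1 : ℕ) : ZMod n) := by rw [c1]; linear_combination -hd1
      rw [hm, ZMod.natCast_eq_natCast_iff'] at hmeq
      rw [Nat.mod_eq_of_lt (by omega), Nat.mod_eq_of_lt (by omega)] at hmeq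
      omega
  · -- q < 2n : use injectivity
    have hqform := stretch_prefix_sum n k q (by omega)
    rw [haform, hqform] at hdec
    obtain ⟨hd1, hd2⟩ := Prod.mk.injEq .. ▸ hdec
    have hc1 : ((a / 2 : ℕ) : ZMod n) = ((q / 2 : ℕ) : ZMod n) :=
      mul_right_cancel₀ hmne hd1
    have hc2 : (((a + 1) / 2 : ℕ) : ZMod n) = (((q + 1) / 2 : ℕ) : ZMod n) :=
      mul_right_cancel₀ hmne hd2
    rw [ZMod.natCast_eq_natCast_iff'] at hc1 hc2
    rw [Nat.mod_eq_of_lt (by omega : a / 2 < n),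
      Nat.mod_eq_of_lt (by omega : q / 2 < n)] at hc1
    have hb2 : (a + 1) / 2 < n := by omega
    rw [Nat.mod_eq_of_lt hb2] at hc2
    by_cases hqt : (q + 1) / 2 < n
    · rw [Nat.mod_eq_of_lt hqt] at hc2
      omega
    · have hqn : (q + 1) / 2 = n := by omega
      rw [hqn, Nat.mod_self] at hc2
      omega
end

section
/- Let n be an odd prime and let a = [a₁,...,a_{n(n-1)}] be the staircase array over Z_n × Z_n. Then for all 0 ≤ i < j ≤ n(n-1) - 1, it holds that: (the second coordinate of a_{i+1}+...+a_j is nonzero or a_{i+1} ≠ a_{j+1}), and (the second coordinate of a_{i+1}+...+a_{j+1} is nonzero or a_{i+1} ≠ -a_{j+1}). Consequently, the path in K_n □ K_n determined by the staircase array contains at most one edge from each edge orbit under the group generated by (a,b) ↦ (a+1,b). -/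
open Finset

private lemma sum_Icc_sub' {M : Type*} [AddCommGroup M] (f : ℕ → M) {a b : ℕ} (h : a ≤ b) :
    ∑ g ∈ Icc (a + 1) b, f g = ∑ g ∈ Icc 1 b, f g - ∑ g ∈ Icc 1 a, f g := by
  rw [eq_sub_iff_add_eq, ← Finset.Ico_add_one_right_eq_Icc, ← Finset.Ico_add_one_right_eq_Icc, ← Finset.Ico_add_one_right_eq_Icc,
    add_comm, Finset.sum_Ico_consecutive _ (by omega) (by omega)]

private lemma modDiv' (n k r : ℕ) (hn : 0 < n) (hr : r < n) :
    (n * k + r) % n = r ∧ (n * k + r) / n = k := by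
  refine ⟨?_, ?_⟩
  · rw [Nat.mul_add_mod, Nat.mod_eq_of_lt hr]
  · rw [Nat.mul_add_div hn, Nat.div_eq_of_lt hr, Nat.add_zero]

private lemma staircase_eq' (n i k r : ℕ) (h : i = 2 * n * k + r) (hr : r < 2 * n) (hn : 0 < n) :
    staircase n (i + 1) = stretchEntry n (k + 1) (r + 1) := by
  have h2n : 0 < 2 * n := by omega
  unfold staircase
  rw [Nat.add_sub_cancel, h, (modDiv' _ _ _ h2n hr).1, (modDiv' _ _ _ h2n hr).2]

private lemma staircase_sum_snd (n : ℕ) (hn : 0 < n) (m : ℕ) :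
    (∑ g ∈ Icc 1 m, staircase n g).2 =
      (((m % (2 * n) + 1) / 2 * (2 * (m / (2 * n)) + 1) : ℕ) : ZMod n) := by
  have h2n : 0 < 2 * n := by omega
  induction m with
  | zero => simp
  | succ m ih =>
    rw [Finset.sum_Icc_succ_top (by omega), Prod.snd_add, ih]
    have hdm := Nat.div_add_mod m (2 * n)
    have hmm := Nat.mod_lt m h2n
    obtain ⟨k, r, hm, hrlt⟩ : ∃ k r, m = 2 * n * k + r ∧ r < 2 * n :=
      ⟨m / (2 * n), m % (2 * n), by omega, hmm⟩
    have hst := staircase_eq' n m k r hm hrlt hn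
    rw [hst]
    rw [show m % (2 * n) = r from by rw [hm, (modDiv' _ _ _ h2n hrlt).1],
        show m / (2 * n) = k from by rw [hm, (modDiv' _ _ _ h2n hrlt).2]]
    by_cases hre : r = 2 * n - 1
    · have hmul : 2 * n * (k + 1) = 2 * n * k + 2 * n := by ring
      have hm1 : m + 1 = 2 * n * (k + 1) + 0 := by omega
      rw [show (m+1) % (2*n) = 0 from by rw [hm1, (modDiv' _ _ _ h2n h2n).1],
          show (m+1) / (2*n) = k + 1 from by rw [hm1, (modDiv' _ _ _ h2n h2n).2]]
      rw [stretchEntry, if_pos (by omega : r + 1 = 2 * n)]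
      have h1 : (r + 1) / 2 * (2 * k + 1) = n * (2 * k + 1) := by
        have : (r + 1) / 2 = n := by omega
        rw [this]
      rw [h1]
      simp [ZMod.natCast_self]
    · have hm1 : m + 1 = 2 * n * k + (r + 1) := by omega
      rw [show (m+1) % (2*n) = r + 1 from by rw [hm1, (modDiv' _ _ _ h2n (by omega)).1],
          show (m+1) / (2*n) = k from by rw [hm1, (modDiv' _ _ _ h2n (by omega)).2]]
      rw [stretchEntry]
      rw [if_neg (by omega : ¬ (r + 1 = 2 * n))]
      by_cases hpar : r % 2 = 0
      · rw [if_pos (by omega : (r + 1) % 2 = 1)]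
        obtain ⟨c, hc⟩ : ∃ c, r = 2 * c := ⟨r / 2, by omega⟩
        rw [show (r + 1) / 2 = c from by omega, show (r + 1 + 1) / 2 = c + 1 from by omega,
            show 2 * (k + 1) - 1 = 2 * k + 1 from by omega]
        push_cast
        ring
      · rw [if_neg (by omega : ¬ ((r + 1) % 2 = 1))]
        rw [show (r + 1 + 1) / 2 = (r + 1) / 2 from by omega]
        simp

private lemma natCast_ne_zero' (n a : ℕ) (h1 : 0 < a) (h2 : a < n) : (a : ZMod n) ≠ 0 := by
  intro h
  have hd := (ZMod.natCast_eq_zero_iff a n).mp h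
  have := Nat.le_of_dvd h1 hd
  omega

private lemma natCast_inj' (n a b : ℕ) (ha : a < n) (hb : b < n)
    (h : (a : ZMod n) = b) : a = b := by
  have h2 := (ZMod.natCast_eq_natCast_iff a b n).mp h
  rwa [Nat.ModEq, Nat.mod_eq_of_lt ha, Nat.mod_eq_of_lt hb] at h2

private lemma natCast_neg_dvd' (n a b : ℕ) (h : (a : ZMod n) = -(b : ZMod n)) :
    n ∣ a + b := by
  have h0 : ((a + b : ℕ) : ZMod n) = 0 := by push_cast; rw [h]; ring
  exact (ZMod.natCast_eq_zero_iff _ _).mp h0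

private lemma mulCast_ne_zero' (n : ℕ) (hn : n.Prime) (a b : ℕ) (ha1 : 0 < a) (ha2 : a < n)
    (hb1 : 0 < b) (hb2 : b < n) : ((a * b : ℕ) : ZMod n) ≠ 0 := by
  haveI := Fact.mk hn
  rw [Nat.cast_mul]
  exact mul_ne_zero (natCast_ne_zero' n a ha1 ha2) (natCast_ne_zero' n b hb1 hb2)

private lemma dvd_between' (n s : ℕ) (h : n ∣ s) (h1 : 0 < s) (h2 : s < 2 * n) : s = n := by
  obtain ⟨c, rfl⟩ := h
  rcases c with _ | _ | c
  · omega
  · omega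
  · have h3 : n * (c + 1 + 1) = n * c + 2 * n := by ring
    omega

private lemma final_ne' (n : ℕ) (hn : n.Prime) (cA cB k : ℕ)
    (h1 : cA < cB) (h2 : cB - cA < n) (h3 : 2 * k + 1 < n) :
    ((cB * (2 * k + 1) : ℕ) : ZMod n) - ((cA * (2 * k + 1) : ℕ) : ZMod n) ≠ 0 := by
  intro h0
  apply mulCast_ne_zero' n hn (cB - cA) (2 * k + 1) (by omega) h2 (by omega) h3
  rw [Nat.cast_mul, Nat.cast_sub h1.le]
  push_cast at h0 ⊢
  linear_combination h0

open Finset in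
/-- For `n` an odd prime and `a` the staircase array, for all `0 ≤ i < j ≤ n(n-1)-1`:
(the second coordinate of `a_{i+1}+⋯+a_j` is nonzero or `a_{i+1} ≠ a_{j+1}`) and
(the second coordinate of `a_{i+1}+⋯+a_{j+1}` is nonzero or `a_{i+1} ≠ -a_{j+1}`).
Consequently the staircase path in `K_n □ K_n` contains at most one edge from each
edge orbit under the group generated by `(a,b) ↦ (a+1,b)`. -/
theorem staircase_one_edge_per_orbit (n : ℕ) (hn : n.Prime) (ho : Odd n) :
    (∀ i j, i < j → j ≤ n * (n - 1) - 1 →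
      ((∑ g ∈ Icc (i + 1) j, staircase n g).2 ≠ 0 ∨
        staircase n (i + 1) ≠ staircase n (j + 1)) ∧
      ((∑ g ∈ Icc (i + 1) (j + 1), staircase n g).2 ≠ 0 ∨
        staircase n (i + 1) ≠ -staircase n (j + 1))) ∧
    (∀ v₀ : ZMod n × ZMod n, ∀ i j, i < j → j < n * (n - 1) → ∀ t : ZMod n,
      Sym2.map (shift n n t)
          s(v₀ + ∑ g ∈ Icc 1 i, staircase n g,
            v₀ + ∑ g ∈ Icc 1 (i + 1), staircase n g) ≠
        s(v₀ + ∑ g ∈ Icc 1 j, staircase n g,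
          v₀ + ∑ g ∈ Icc 1 (j + 1), staircase n g)) := by
  obtain ⟨w, hw⟩ := ho
  have hn0 : 0 < n := hn.pos
  have hw1 : 1 ≤ w := by have h2 := hn.two_le; omega
  have h2n : 0 < 2 * n := by omega
  have main : ∀ i j, i < j → j ≤ n * (n - 1) - 1 →
      ((∑ g ∈ Icc (i + 1) j, staircase n g).2 ≠ 0 ∨
        staircase n (i + 1) ≠ staircase n (j + 1)) ∧
      ((∑ g ∈ Icc (i + 1) (j + 1), staircase n g).2 ≠ 0 ∨
        staircase n (i + 1) ≠ -staircase n (j + 1)) := by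
    intro i j hij hj
    obtain ⟨kA, rA, hiA, hrA⟩ : ∃ k r, i = 2 * n * k + r ∧ r < 2 * n :=
      ⟨i / (2 * n), i % (2 * n), by have := Nat.div_add_mod i (2 * n); omega, Nat.mod_lt _ h2n⟩
    obtain ⟨kB, rB, hiB, hrB⟩ : ∃ k r, j = 2 * n * k + r ∧ r < 2 * n :=
      ⟨j / (2 * n), j % (2 * n), by have := Nat.div_add_mod j (2 * n); omega, Nat.mod_lt _ h2n⟩
    have hmodi : i % (2 * n) = rA := by rw [hiA, (modDiv' _ _ _ h2n hrA).1]
    have hdivi : i / (2 * n) = kA := by rw [hiA, (modDiv' _ _ _ h2n hrA).2]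
    have hmodj : j % (2 * n) = rB := by rw [hiB, (modDiv' _ _ _ h2n hrB).1]
    have hdivj : j / (2 * n) = kB := by rw [hiB, (modDiv' _ _ _ h2n hrB).2]
    have hnn : n * (n - 1) = w * (2 * n) := by
      rw [show n - 1 = 2 * w from by omega]; ring
    have hj2 : j < w * (2 * n) := by
      rw [← hnn]
      exact lt_of_le_of_lt hj (Nat.sub_lt (Nat.mul_pos hn0 (by omega)) one_pos)
    have hkB : kB < w := by
      have h := (Nat.div_lt_iff_lt_mul h2n).mpr hj2
      rwa [hdivj] at h
    have hkA : kA < w := by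
      have h := (Nat.div_lt_iff_lt_mul h2n).mpr (lt_trans hij hj2)
      rwa [hdivi] at h
    constructor
    · rw [or_iff_not_imp_right, not_not]
      intro heq
      rw [sum_Icc_sub' _ hij.le, Prod.snd_sub, staircase_sum_snd n hn0 j,
        staircase_sum_snd n hn0 i, hmodi, hdivi, hmodj, hdivj]
      rw [staircase_eq' n i kA rA hiA hrA hn0, staircase_eq' n j kB rB hiB hrB hn0] at heq
      simp only [stretchEntry] at heq
      by_cases hAE : rA = 2 * n - 1
      · rw [if_pos (by omega : rA + 1 = 2 * n)] at heq
        by_cases hBE : rB = 2 * n - 1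
        · rw [if_pos (by omega : rB + 1 = 2 * n), Prod.mk.injEq] at heq
          have h1 := natCast_inj' n _ _ (by omega) (by omega) heq.1
          exfalso
          have hijeq : i = j := by
            rw [hiA, hiB, hAE, hBE, show kA = kB from by omega]
          omega
        · rw [if_neg (by omega : ¬ (rB + 1 = 2 * n))] at heq
          by_cases hBp : rB % 2 = 0
          · rw [if_pos (by omega : (rB + 1) % 2 = 1), Prod.mk.injEq] at heq
            exact absurd heq.1 (natCast_ne_zero' n _ (by omega) (by omega))
          · rw [if_neg (by omega : ¬ ((rB + 1) % 2 = 1)), Prod.mk.injEq] at heq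
            have := natCast_inj' n _ _ (by omega) (by omega) heq.1
            exact absurd this (by omega)
      · rw [if_neg (by omega : ¬ (rA + 1 = 2 * n))] at heq
        by_cases hBE : rB = 2 * n - 1
        · rw [if_pos (by omega : rB + 1 = 2 * n)] at heq
          by_cases hAp : rA % 2 = 0
          · rw [if_pos (by omega : (rA + 1) % 2 = 1), Prod.mk.injEq] at heq
            exact absurd heq.2 (natCast_ne_zero' n _ (by omega) (by omega))
          · rw [if_neg (by omega : ¬ ((rA + 1) % 2 = 1)), Prod.mk.injEq] at heq
            have := natCast_inj' n _ _ (by omega) (by omega) heq.1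
            exact absurd this (by omega)
        · rw [if_neg (by omega : ¬ (rB + 1 = 2 * n))] at heq
          by_cases hAp : rA % 2 = 0 <;> by_cases hBp : rB % 2 = 0
          · rw [if_pos (by omega : (rA + 1) % 2 = 1),
              if_pos (by omega : (rB + 1) % 2 = 1), Prod.mk.injEq] at heq
            have hk := natCast_inj' n _ _ (by omega) (by omega) heq.2
            have hkk : kA = kB := by omega
            have hrr : rA < rB := by
              have h := hij; rw [hiA, hiB, hkk] at h; omega
            rw [hkk]
            exact final_ne' n hn _ _ _ (by omega) (by omega) (by omega)
          · rw [if_pos (by omega : (rA + 1) % 2 = 1),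
              if_neg (by omega : ¬ ((rB + 1) % 2 = 1)), Prod.mk.injEq] at heq
            exact absurd heq.1.symm (natCast_ne_zero' n _ (by omega) (by omega))
          · rw [if_neg (by omega : ¬ ((rA + 1) % 2 = 1)),
              if_pos (by omega : (rB + 1) % 2 = 1), Prod.mk.injEq] at heq
            exact absurd heq.1 (natCast_ne_zero' n _ (by omega) (by omega))
          · rw [if_neg (by omega : ¬ ((rA + 1) % 2 = 1)),
              if_neg (by omega : ¬ ((rB + 1) % 2 = 1)), Prod.mk.injEq] at heq
            have hk := natCast_inj' n _ _ (by omega) (by omega) heq.1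
            have hkk : kA = kB := by omega
            have hrr : rA < rB := by
              have h := hij; rw [hiA, hiB, hkk] at h; omega
            rw [hkk]
            exact final_ne' n hn _ _ _ (by omega) (by omega) (by omega)
    · rw [or_iff_not_imp_right, not_not]
      intro heq
      rw [sum_Icc_sub' _ (by omega : i ≤ j + 1), Prod.snd_sub,
        staircase_sum_snd n hn0 (j + 1), staircase_sum_snd n hn0 i, hmodi, hdivi]
      rw [staircase_eq' n i kA rA hiA hrA hn0, staircase_eq' n j kB rB hiB hrB hn0] at heq
      simp only [stretchEntry] at heq
      by_cases hBE : rB = 2 * n - 1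
      · have hmul : 2 * n * (kB + 1) = 2 * n * kB + 2 * n := by ring
        have hj1 : j + 1 = 2 * n * (kB + 1) + 0 := by omega
        rw [show (j + 1) % (2 * n) = 0 from by rw [hj1, (modDiv' _ _ _ h2n h2n).1],
            show (j + 1) / (2 * n) = kB + 1 from by rw [hj1, (modDiv' _ _ _ h2n h2n).2]]
        rw [if_pos (by omega : rB + 1 = 2 * n)] at heq
        by_cases hAE : rA = 2 * n - 1
        · rw [if_pos (by omega : rA + 1 = 2 * n), Prod.neg_mk, Prod.mk.injEq] at heq
          have hd := natCast_neg_dvd' n _ _ heq.1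
          have := dvd_between' n _ hd (by omega) (by omega)
          omega
        · rw [if_neg (by omega : ¬ (rA + 1 = 2 * n))] at heq
          by_cases hAp : rA % 2 = 0
          · rw [if_pos (by omega : (rA + 1) % 2 = 1), Prod.neg_mk, Prod.mk.injEq] at heq
            have h0 : ((2 * (kB + 1) : ℕ) : ZMod n) = 0 := by
              have := heq.1.symm; rwa [neg_eq_zero] at this
            exact absurd h0 (natCast_ne_zero' n _ (by omega) (by omega))
          · -- H vs E : survivor
            rw [show (0 + 1) / 2 * (2 * (kB + 1) + 1) = 0 from by simp]
            rw [show (rA + 1) / 2 * (2 * kA + 1)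
                = ((rA + 1) / 2) * (2 * kA + 1) from rfl]
            simp only [Nat.cast_zero, zero_sub, neg_ne_zero]
            exact mulCast_ne_zero' n hn _ _ (by omega) (by omega) (by omega) (by omega)
      · have hj1 : j + 1 = 2 * n * kB + (rB + 1) := by omega
        rw [show (j + 1) % (2 * n) = rB + 1 from by
              rw [hj1, (modDiv' _ _ _ h2n (by omega)).1],
            show (j + 1) / (2 * n) = kB from by
              rw [hj1, (modDiv' _ _ _ h2n (by omega)).2]]
        rw [if_neg (by omega : ¬ (rB + 1 = 2 * n))] at heq
        by_cases hAE : rA = 2 * n - 1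
        · rw [if_pos (by omega : rA + 1 = 2 * n)] at heq
          by_cases hBp : rB % 2 = 0
          · rw [if_pos (by omega : (rB + 1) % 2 = 1), Prod.neg_mk, Prod.mk.injEq] at heq
            have h0 : ((2 * (kB + 1) - 1 : ℕ) : ZMod n) = 0 := by
              have := heq.2.symm; rwa [neg_eq_zero] at this
            exact absurd h0 (natCast_ne_zero' n _ (by omega) (by omega))
          · -- E vs H : survivor
            rw [show (rA + 1) / 2 * (2 * kA + 1) = n * (2 * kA + 1) from by
              rw [show (rA + 1) / 2 = n from by omega]]
            have hz : ((n * (2 * kA + 1) : ℕ) : ZMod n) = 0 := by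
              push_cast; simp
            rw [hz, sub_zero]
            exact mulCast_ne_zero' n hn _ _ (by omega) (by omega) (by omega) (by omega)
        · rw [if_neg (by omega : ¬ (rA + 1 = 2 * n))] at heq
          by_cases hAp : rA % 2 = 0 <;> by_cases hBp : rB % 2 = 0
          · rw [if_pos (by omega : (rA + 1) % 2 = 1),
              if_pos (by omega : (rB + 1) % 2 = 1), Prod.neg_mk, Prod.mk.injEq] at heq
            have hd := natCast_neg_dvd' n _ _ heq.2
            have := dvd_between' n _ hd (by omega) (by omega)
            omega
          · rw [if_pos (by omega : (rA + 1) % 2 = 1),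
              if_neg (by omega : ¬ ((rB + 1) % 2 = 1)), Prod.neg_mk, Prod.mk.injEq] at heq
            have h0 : ((2 * (kA + 1) - 1 : ℕ) : ZMod n) = 0 := by
              have := heq.2; rwa [neg_zero] at this
            exact absurd h0 (natCast_ne_zero' n _ (by omega) (by omega))
          · rw [if_neg (by omega : ¬ ((rA + 1) % 2 = 1)),
              if_pos (by omega : (rB + 1) % 2 = 1), Prod.neg_mk, Prod.mk.injEq] at heq
            have h0 : ((2 * (kB + 1) - 1 : ℕ) : ZMod n) = 0 := by
              have := heq.2.symm; rwa [neg_eq_zero] at this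
            exact absurd h0 (natCast_ne_zero' n _ (by omega) (by omega))
          · rw [if_neg (by omega : ¬ ((rA + 1) % 2 = 1)),
              if_neg (by omega : ¬ ((rB + 1) % 2 = 1)), Prod.neg_mk, Prod.mk.injEq] at heq
            have hd := natCast_neg_dvd' n _ _ heq.1
            have := dvd_between' n _ hd (by omega) (by omega)
            omega
  refine ⟨main, ?_⟩
  intro v₀ i j hij hj t hcon
  rw [Sym2.map_pair_eq, Sym2.eq_iff] at hcon
  have hj1 : j ≤ n * (n - 1) - 1 := Nat.le_sub_one_of_lt hj
  obtain ⟨hc1, hc2⟩ := main i j hij hj1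
  have hstepi : staircase n (i + 1) =
      (∑ g ∈ Icc 1 (i + 1), staircase n g) - ∑ g ∈ Icc 1 i, staircase n g := by
    rw [Finset.sum_Icc_succ_top (by omega)]; abel
  have hstepj : staircase n (j + 1) =
      (∑ g ∈ Icc 1 (j + 1), staircase n g) - ∑ g ∈ Icc 1 j, staircase n g := by
    rw [Finset.sum_Icc_succ_top (by omega)]; abel
  rcases hcon with ⟨h1, h2⟩ | ⟨h1, h2⟩
  · have e1 := congrArg Prod.fst h1
    have e2 := congrArg Prod.snd h1
    have e3 := congrArg Prod.fst h2
    have e4 := congrArg Prod.snd h2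
    simp only [shift, Prod.fst_add, Prod.snd_add] at e1 e2 e3 e4
    rcases hc1 with hne | hne
    · apply hne
      rw [sum_Icc_sub' _ hij.le, Prod.snd_sub]
      linear_combination -e2
    · apply hne
      rw [hstepi, hstepj]
      apply Prod.ext
      · simp only [Prod.fst_sub]; linear_combination e3 - e1
      · simp only [Prod.snd_sub]; linear_combination e4 - e2
  · have e1 := congrArg Prod.fst h1
    have e2 := congrArg Prod.snd h1
    have e3 := congrArg Prod.fst h2
    have e4 := congrArg Prod.snd h2
    simp only [shift, Prod.fst_add, Prod.snd_add] at e1 e2 e3 e4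
    rcases hc2 with hne | hne
    · apply hne
      rw [sum_Icc_sub' _ (by omega : i ≤ j + 1), Prod.snd_sub]
      linear_combination -e2
    · apply hne
      rw [hstepi, hstepj]
      apply Prod.ext
      · simp only [Prod.fst_sub, Prod.fst_neg]; linear_combination e3 - e1
      · simp only [Prod.snd_sub, Prod.snd_neg]; linear_combination e4 - e2
end

section
/- For every odd prime n, the graph K_n □ K_n admits a decomposition into n paths, each of length n(n-1), that is transitive under the cyclic group of order n acting by (a,b) ↦ (a+1,b) on the vertex set Z_n × Z_n. -/
namespace TPD

/-- half of `n-1` -/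
def hD (n : ℕ) : ℕ := (n - 1) / 2
/-- number of "horizontal steps" -/
def M (n : ℕ) : ℕ := n * hD n
/-- path length -/
def L (n : ℕ) : ℕ := n * (n - 1)
/-- block index (1-based) -/
def dd (n k : ℕ) : ℕ := k / n + 1
/-- in-block index -/
def ri (n k : ℕ) : ℕ := k % n
/-- row of step `k` -/
def rr (n k : ℕ) : ZMod n := (ri n k : ZMod n) * (dd n k : ZMod n)
/-- left column of step `k` -/
def aa (n k : ℕ) : ZMod n := 2 * rr n k - (dd n k : ZMod n) + if ri n k = 0 then 1 else 0
/-- the path, shifted by `t` -/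
def X (n : ℕ) (t : ZMod n) (j : ℕ) : ZMod n × ZMod n :=
  if j % 2 = 0 then (aa n (j / 2) + t, rr n (j / 2)) else (aa n (j / 2 + 1) + t, rr n (j / 2))

section Basic
variable {n : ℕ} (hn : n.Prime) (ho : Odd n)

include hn ho

lemma three_le : 3 ≤ n := by
  rcases ho with ⟨m, rfl⟩
  have := hn.two_le
  omega

lemma n_eq : n = 2 * hD n + 1 := by
  rcases ho with ⟨m, rfl⟩
  simp only [hD, Nat.add_sub_cancel]
  omega

lemma L_eq : L n = 2 * M n := by
  have h := n_eq hn ho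
  have h2 : n - 1 = 2 * hD n := by omega
  unfold L M
  rw [h2] ; ring

lemma hD_pos : 1 ≤ hD n := by
  have h1 := n_eq hn ho
  have h2 := three_le hn ho
  omega

omit ho in lemma npos : 0 < n := hn.pos

omit hn ho in
-- cast injectivity
lemma cast_inj_lt {u v : ℕ} (hu : u < n) (hv : v < n) (h : (u : ZMod n) = v) : u = v := by
  have := ZMod.val_cast_of_lt (n := n) hu
  have := ZMod.val_cast_of_lt (n := n) hv
  rw [← this, ← h] ; omega

omit ho in
lemma cast_ne_zero {u : ℕ} (h1 : 0 < u) (hu : u < n) : (u : ZMod n) ≠ 0 := by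
  intro h
  have : u = 0 := cast_inj_lt hu (npos hn) (by simpa using h)
  omega

lemma cast_ne_one {u : ℕ} (h1 : 2 ≤ u) (hu : u ≤ n) : (u : ZMod n) ≠ 1 := by
  intro h
  rcases eq_or_lt_of_le hu with he | hu'
  · have h3 := three_le hn ho
    rw [he, ZMod.natCast_self] at h
    have h4 : ((1:ℕ) : ZMod n) = 0 := by exact_mod_cast h.symm
    exact cast_ne_zero hn (by omega) (by omega) h4
  · have : u = 1 := cast_inj_lt hu' (by omega) (by exact_mod_cast h)
    omega

end Basic


section Struct
variable {n : ℕ} (hn : n.Prime) (ho : Odd n) {k k' : ℕ}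

include hn ho

omit ho in
lemma ri_lt : ri n k < n := Nat.mod_lt _ (npos hn)

omit hn ho in
lemma dd_pos : 1 ≤ dd n k := by simp [dd]

omit ho in
lemma dd_le_of_lt (hk : k < M n) : dd n k ≤ hD n := by
  have h0 := npos hn
  have : k / n < hD n := Nat.div_lt_of_lt_mul (by unfold M at hk ; exact hk)
  unfold dd ; omega

omit ho in
lemma dd_le (hk : k ≤ M n) : dd n k ≤ hD n + 1 := by
  rcases Nat.lt_or_ge k (M n) with h | h
  · have := dd_le_of_lt hn h ; omega
  · have : k = M n := by omega
    subst this
    unfold dd M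
    rw [Nat.mul_div_cancel_left _ (npos hn)]

lemma hD1_lt : hD n + 1 < n := by
  have h1 := n_eq hn ho
  have h2 := hD_pos hn ho
  omega

omit hn ho in
lemma M_ri : ri n (M n) = 0 := by
  unfold ri M ; simp [Nat.mul_mod_right]

omit ho in
lemma M_dd : dd n (M n) = hD n + 1 := by
  unfold dd M ; rw [Nat.mul_div_cancel_left _ (npos hn)]

lemma ddcast_ne_zero (hk : k ≤ M n) : ((dd n k : ℕ) : ZMod n) ≠ 0 :=
  cast_ne_zero hn dd_pos (by have := dd_le hn hk ; have := hD1_lt hn ho ; omega)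

lemma two_ne_zero' : (2 : ZMod n) ≠ 0 := by
  have h := cast_ne_zero (n := n) hn (u := 2) (by omega) (by have := three_le hn ho ; omega)
  simpa using h

omit hn ho in
lemma succ_divmod_lt (h : ri n k < n - 1) :
    ri n (k + 1) = ri n k + 1 ∧ dd n (k + 1) = dd n k := by
  have e := Nat.mod_add_div k n
  have hn0 : 0 < n := by unfold ri at h ; omega
  have hk1 : k + 1 = (k % n + 1) + n * (k / n) := by omega
  refine ⟨?_, ?_⟩
  · show (k+1) % n = k % n + 1
    rw [hk1, Nat.add_mul_mod_self_left, Nat.mod_eq_of_lt (by unfold ri at h ; omega)]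
  · show (k+1) / n + 1 = k / n + 1
    rw [hk1, Nat.add_mul_div_left _ _ hn0, Nat.div_eq_of_lt (by unfold ri at h ; omega)]
    omega

omit hn ho in
lemma succ_divmod_last (hn0 : 0 < n) (h : ri n k = n - 1) :
    ri n (k + 1) = 0 ∧ dd n (k + 1) = dd n k + 1 := by
  have e := Nat.mod_add_div k n
  have e2 : n * (k / n + 1) = n * (k / n) + n := by ring
  have hk1 : k + 1 = n * (k / n + 1) := by unfold ri at h ; omega
  refine ⟨?_, ?_⟩
  · show (k+1) % n = 0
    rw [hk1] ; simp [Nat.mul_mod_right]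
  · show (k+1) / n + 1 = (k / n + 1) + 1
    rw [hk1, Nat.mul_div_cancel_left _ hn0]

omit hn ho in
lemma cast_pred (hn3 : 1 ≤ n) : ((n - 1 : ℕ) : ZMod n) = -1 := by
  have : ((n - 1 : ℕ) : ZMod n) + 1 = ((n : ℕ) : ZMod n) := by
    rw [← Nat.cast_add_one]
    congr 1
    omega
  rw [ZMod.natCast_self] at this
  linear_combination this

omit ho in
lemma rr_succ (hk : k < M n) : rr n (k + 1) = rr n k + (dd n k : ZMod n) := by
  rcases Nat.lt_or_ge (ri n k) (n - 1) with h | h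
  · obtain ⟨h1, h2⟩ := succ_divmod_lt h
    unfold rr
    rw [h1, h2]
    push_cast
    ring
  · have h' : ri n k = n - 1 := by have := ri_lt (k := k) hn ; omega
    obtain ⟨h1, h2⟩ := succ_divmod_last (npos hn) h'
    unfold rr
    rw [h1, h2, h']
    rw [cast_pred (by have := npos hn ; omega)]
    push_cast
    ring

omit ho in
lemma aa_succ (hk : k < M n) : aa n (k + 1) = 2 * rr n k + (dd n k : ZMod n) := by
  rcases Nat.lt_or_ge (ri n k) (n - 1) with h | h
  · obtain ⟨h1, h2⟩ := succ_divmod_lt h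
    unfold aa rr
    rw [h1, h2, if_neg (by omega)]
    push_cast
    ring
  · have h' : ri n k = n - 1 := by have := ri_lt (k := k) hn ; omega
    obtain ⟨h1, h2⟩ := succ_divmod_last (npos hn) h'
    unfold aa rr
    rw [h1, h2, h', if_pos rfl]
    rw [cast_pred (by have := npos hn ; omega)]
    push_cast
    ring

lemma rr_zero_iff (hk : k ≤ M n) : rr n k = 0 ↔ ri n k = 0 := by
  haveI : Fact n.Prime := ⟨hn⟩
  constructor
  · intro h
    unfold rr at h
    rcases mul_eq_zero.1 h with h' | h'
    · exact cast_inj_lt (ri_lt hn) (npos hn) (by simpa using h')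
    · exact absurd h' (ddcast_ne_zero hn ho hk)
  · intro h
    unfold rr ; rw [h] ; simp

lemma step_eq (hk : k ≤ M n) (hk' : k' ≤ M n)
    (hd : ((dd n k : ℕ) : ZMod n) = ((dd n k' : ℕ) : ZMod n))
    (hr : rr n k = rr n k') : k = k' := by
  haveI : Fact n.Prime := ⟨hn⟩
  have hlt := hD1_lt hn ho
  have hdk := dd_le hn hk
  have hdk' := dd_le hn hk'
  have hdnat : dd n k = dd n k' := cast_inj_lt (by omega) (by omega) hd
  unfold rr at hr
  rw [hd] at hr
  have hi : ri n k = ri n k' :=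
    cast_inj_lt (ri_lt hn) (ri_lt hn)
      (mul_right_cancel₀ (ddcast_ne_zero hn ho hk') hr)
  have e1 := Nat.mod_add_div k n
  have e2 := Nat.mod_add_div k' n
  unfold ri at hi
  unfold dd at hdnat
  have e3 : n * (k / n) = n * (k' / n) := by rw [(by omega : k / n = k' / n)]
  omega

end Struct
section Inj
variable {n : ℕ} (hn : n.Prime) (ho : Odd n) {k k' : ℕ} {t : ZMod n}

include hn ho

lemma sum_ne_zero {d d' : ℕ} (h1 : 1 ≤ d) (h2 : d ≤ hD n) (h1' : 1 ≤ d') (h2' : d' ≤ hD n) :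
    ((d : ZMod n) + (d' : ZMod n)) ≠ 0 := by
  have hne := n_eq hn ho
  intro h
  exact cast_ne_zero hn (u := d + d') (by omega) (by omega) (by push_cast ; exact h) 

lemma sum_ne_one {d d' : ℕ} (h1 : 1 ≤ d) (h2 : d ≤ hD n + 1) (h1' : 1 ≤ d') (h2' : d' ≤ hD n) :
    ((d : ZMod n) + (d' : ZMod n)) ≠ 1 := by
  have hne := n_eq hn ho
  intro h
  exact cast_ne_one hn ho (u := d + d') (by omega) (by omega) (by push_cast ; exact h)

omit hn ho in
lemma rr_of_ri_zero (h : ri n k = 0) : rr n k = 0 := by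
  unfold rr ; rw [h] ; simp

lemma inj_ee (hk : k ≤ M n) (hk' : k' ≤ M n) (hr : rr n k = rr n k')
    (ha : aa n k = aa n k') : k = k' := by
  by_cases h0 : ri n k = 0 <;> by_cases h0' : ri n k' = 0
  · unfold aa at ha
    rw [if_pos h0, if_pos h0', rr_of_ri_zero h0, rr_of_ri_zero h0'] at ha
    exact step_eq hn ho hk hk' (by linear_combination -ha) hr
  · exact absurd ((rr_zero_iff hn ho hk').1 (hr ▸ rr_of_ri_zero h0)) h0'
  · exact absurd ((rr_zero_iff hn ho hk).1 (hr.symm ▸ rr_of_ri_zero h0')) h0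
  · unfold aa at ha
    rw [if_neg h0, if_neg h0', hr] at ha
    exact step_eq hn ho hk hk' (by linear_combination -ha) hr

lemma inj_eo (hk : k ≤ M n) (hk' : k' < M n) (hr : rr n k = rr n k')
    (ha : aa n k = 2 * rr n k' + ((dd n k' : ℕ) : ZMod n)) : False := by
  by_cases h0 : ri n k = 0
  · have h0' : ri n k' = 0 := (rr_zero_iff hn ho (le_of_lt hk')).1 (hr ▸ rr_of_ri_zero h0)
    unfold aa at ha
    rw [if_pos h0, rr_of_ri_zero h0, rr_of_ri_zero h0'] at ha
    exact sum_ne_one hn ho (dd_pos) (dd_le hn hk) (dd_pos) (dd_le_of_lt hn hk')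
      (by linear_combination -ha)
  · have hkM : k ≠ M n := fun e => h0 (by rw [e] ; exact M_ri)
    unfold aa at ha
    rw [if_neg h0, hr] at ha
    exact sum_ne_zero hn ho (dd_pos) (dd_le_of_lt hn (by omega : k < M n)) (dd_pos)
      (dd_le_of_lt hn hk') (by linear_combination -ha)

lemma inj_oo (hk : k < M n) (hk' : k' < M n) (hr : rr n k = rr n k')
    (ha : 2 * rr n k + ((dd n k : ℕ) : ZMod n) = 2 * rr n k' + ((dd n k' : ℕ) : ZMod n)) :
    k = k' := by
  rw [hr] at ha
  exact step_eq hn ho (le_of_lt hk) (le_of_lt hk') (by linear_combination ha) hr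

omit hn ho in
lemma X_even {j : ℕ} (h : j % 2 = 0) : X n t j = (aa n (j / 2) + t, rr n (j / 2)) :=
  if_pos h

omit hn ho in
lemma X_odd {j : ℕ} (h : j % 2 = 1) : X n t j = (aa n (j / 2 + 1) + t, rr n (j / 2)) :=
  if_neg (by omega)

lemma X_inj {j j' : ℕ} (hj : j ≤ L n) (hj' : j' ≤ L n)
    (h : X n t j = X n t j') : j = j' := by
  have hL := L_eq hn ho
  rcases Nat.even_or_odd j with ⟨m, hm⟩ | ⟨m, hm⟩ <;>
    rcases Nat.even_or_odd j' with ⟨m', hm'⟩ | ⟨m', hm'⟩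
  · rw [X_even (by omega : j % 2 = 0), X_even (by omega : j' % 2 = 0)] at h
    obtain ⟨h1, h2⟩ := Prod.mk.injEq .. ▸ h
    replace h1 := add_right_cancel h1
    have := inj_ee hn ho (k := j / 2) (k' := j' / 2) (by omega) (by omega) h2 h1
    omega
  · rw [X_even (by omega : j % 2 = 0), X_odd (by omega : j' % 2 = 1)] at h
    obtain ⟨h1, h2⟩ := Prod.mk.injEq .. ▸ h
    replace h1 := add_right_cancel h1
    have hk' : j' / 2 < M n := by omega
    rw [aa_succ hn hk'] at h1
    exact absurd (inj_eo hn ho (k := j / 2) (by omega) hk' h2 h1) (fun h => h)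
  · rw [X_odd (by omega : j % 2 = 1), X_even (by omega : j' % 2 = 0)] at h
    obtain ⟨h1, h2⟩ := Prod.mk.injEq .. ▸ h
    replace h1 := add_right_cancel h1
    have hk : j / 2 < M n := by omega
    rw [aa_succ hn hk] at h1
    exact absurd (inj_eo hn ho (k := j' / 2) (by omega) hk h2.symm h1.symm) (fun h => h)
  · rw [X_odd (by omega : j % 2 = 1), X_odd (by omega : j' % 2 = 1)] at h
    obtain ⟨h1, h2⟩ := Prod.mk.injEq .. ▸ h
    replace h1 := add_right_cancel h1
    have hk : j / 2 < M n := by omega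
    have hk' : j' / 2 < M n := by omega
    rw [aa_succ hn hk, aa_succ hn hk'] at h1
    have := inj_oo hn ho hk hk' h2 h1
    omega

lemma aa_ne (hk : k < M n) : aa n k ≠ aa n (k + 1) := by
  have hne := n_eq hn ho
  have hdle := dd_le_of_lt hn hk
  have hdpos := dd_pos (n := n) (k := k)
  rw [aa_succ hn hk]
  unfold aa
  by_cases h0 : ri n k = 0
  · rw [if_pos h0, rr_of_ri_zero h0]
    intro h
    exact cast_ne_one hn ho (u := 2 * dd n k) (by omega) (by omega)
      (by push_cast ; linear_combination -h)
  · rw [if_neg h0]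
    intro h
    exact cast_ne_zero hn (u := 2 * dd n k) (by omega) (by omega)
      (by push_cast ; linear_combination -h)

lemma X_adj {j : ℕ} (hj : j < L n) : (rook n n).Adj (X n t j) (X n t (j + 1)) := by
  have hL := L_eq hn ho
  rcases Nat.even_or_odd j with ⟨m, hm⟩ | ⟨m, hm⟩
  · have he : j % 2 = 0 := by omega
    have hk : j / 2 < M n := by omega
    rw [X_even he, X_odd (by omega : (j+1) % 2 = 1),
      (by omega : (j + 1) / 2 = j / 2)]
    refine ⟨?_, Or.inr rfl⟩
    intro h
    obtain ⟨h1, h2⟩ := Prod.mk.injEq .. ▸ h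
    exact aa_ne hn ho hk (add_right_cancel h1)
  · have he : j % 2 = 1 := by omega
    have hk : j / 2 < M n := by omega
    rw [X_odd he, X_even (by omega : (j+1) % 2 = 0),
      (by omega : (j + 1) / 2 = j / 2 + 1)]
    refine ⟨?_, Or.inl rfl⟩
    intro h
    obtain ⟨h1, h2⟩ := Prod.mk.injEq .. ▸ h
    rw [rr_succ hn hk] at h2
    exact ddcast_ne_zero hn ho (le_of_lt hk) (by linear_combination -h2)

end Inj
section Exist
variable {n : ℕ} (hn : n.Prime) (ho : Odd n) {b z : ZMod n} {d : ℕ}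

include hn ho

lemma exD (hz : z ≠ 0) :
    ∃ d : ℕ, 1 ≤ d ∧ d ≤ hD n ∧ (z = (d : ZMod n) ∨ z = -(d : ZMod n)) := by
  haveI : NeZero n := ⟨hn.pos.ne'⟩
  have hne := n_eq hn ho
  have hvlt : z.val < n := ZMod.val_lt z
  have hcast : ((z.val : ℕ) : ZMod n) = z := ZMod.natCast_rightInverse z
  have hv0 : z.val ≠ 0 := by
    intro h
    exact hz (by rw [← hcast, h] ; simp)
  rcases le_or_gt z.val (hD n) with h | h
  · exact ⟨z.val, by omega, h, Or.inl hcast.symm⟩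
  · refine ⟨n - z.val, by omega, by omega, Or.inr ?_⟩
    have : ((n - z.val : ℕ) : ZMod n) = (n : ZMod n) - (z.val : ZMod n) := by
      push_cast [Nat.cast_sub (le_of_lt hvlt)] ; ring
    rw [this, hcast, ZMod.natCast_self]
    ring

lemma ex2 (hz : z ≠ 0) :
    ∃ d : ℕ, 1 ≤ d ∧ d ≤ hD n ∧ (z = 2 * (d : ZMod n) ∨ z = -(2 * (d : ZMod n))) := by
  haveI : Fact n.Prime := ⟨hn⟩
  have h2 := two_ne_zero' hn ho
  have hw0 : z * (2 : ZMod n)⁻¹ ≠ 0 := mul_ne_zero hz (inv_ne_zero h2)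
  have hw : 2 * (z * (2 : ZMod n)⁻¹) = z := by
    field_simp
  obtain ⟨d, hd1, hd2, hc | hc⟩ := exD hn ho hw0
  · exact ⟨d, hd1, hd2, Or.inl (by rw [← hw, hc])⟩
  · exact ⟨d, hd1, hd2, Or.inr (by rw [← hw, hc] ; ring)⟩

lemma exOdd (hz : z ≠ 0) :
    ∃ d : ℕ, 1 ≤ d ∧ d ≤ hD n ∧
      (z = 2 * (d : ZMod n) - 1 ∨ z = -(2 * (d : ZMod n) - 1)) := by
  haveI : Fact n.Prime := ⟨hn⟩
  have h2 := two_ne_zero' hn ho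
  have hne := n_eq hn ho
  by_cases h1 : z = -1
  · exact ⟨1, le_refl _, hD_pos hn ho, Or.inr (by rw [h1] ; push_cast ; ring)⟩
  have hw0 : (z + 1) * (2 : ZMod n)⁻¹ ≠ 0 := by
    refine mul_ne_zero ?_ (inv_ne_zero h2)
    intro h
    exact h1 (by linear_combination h)
  have hw : 2 * ((z + 1) * (2 : ZMod n)⁻¹) = z + 1 := by field_simp
  obtain ⟨d, hd1, hd2, hc | hc⟩ := exD hn ho hw0
  · exact ⟨d, hd1, hd2, Or.inl (by rw [hc] at hw ; linear_combination -hw)⟩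
  · have hz2 : z = -(2 * (d : ZMod n) + 1) := by
      rw [hc] at hw ; linear_combination -hw
    have hdne : d ≠ hD n := by
      intro h
      apply hz
      rw [hz2, h]
      have : (2 * hD n + 1 : ℕ) = n := by omega
      have hcast : ((2 * hD n + 1 : ℕ) : ZMod n) = 0 := by rw [this, ZMod.natCast_self]
      push_cast at hcast
      linear_combination -hcast
    refine ⟨d + 1, by omega, by omega, Or.inr ?_⟩
    rw [hz2] ; push_cast ; ring

end Exist

/-- index of the step in block `d` whose row is `b` -/
def kOf (n : ℕ) (b : ZMod n) (d : ℕ) : ℕ := (d - 1) * n + (b * ((d : ZMod n))⁻¹).val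

section KOf
variable {n : ℕ} (hn : n.Prime) (ho : Odd n) {b : ZMod n} {d : ℕ}

include hn

lemma kOf_lt (hd1 : 1 ≤ d) (hd2 : d ≤ hD n) : kOf n b d < M n := by
  haveI : NeZero n := ⟨hn.pos.ne'⟩
  have hv := ZMod.val_lt (b * ((d : ZMod n))⁻¹)
  have e1 : ((d - 1) + 1) * n = (d - 1) * n + n := by ring
  have e2 : d - 1 + 1 = d := by omega
  have e3 : d * n ≤ hD n * n := Nat.mul_le_mul_right _ hd2
  have e4 : M n = hD n * n := by unfold M ; ring
  rw [e2] at e1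
  unfold kOf
  omega

lemma kOf_dd (hd1 : 1 ≤ d) : dd n (kOf n b d) = d := by
  haveI : NeZero n := ⟨hn.pos.ne'⟩
  have hv := ZMod.val_lt (b * ((d : ZMod n))⁻¹)
  unfold dd kOf
  rw [mul_comm (d-1) n, Nat.mul_add_div hn.pos, Nat.div_eq_of_lt hv]
  omega

lemma kOf_ri : ri n (kOf n b d) = (b * ((d : ZMod n))⁻¹).val := by
  haveI : NeZero n := ⟨hn.pos.ne'⟩
  have hv := ZMod.val_lt (b * ((d : ZMod n))⁻¹)
  unfold ri kOf
  rw [mul_comm (d-1) n, Nat.mul_add_mod, Nat.mod_eq_of_lt hv]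

include ho in
lemma kOf_rr (hd1 : 1 ≤ d) (hd2 : d ≤ hD n) : rr n (kOf n b d) = b := by
  haveI : Fact n.Prime := ⟨hn⟩
  have hdn : ((d : ℕ) : ZMod n) ≠ 0 :=
    cast_ne_zero hn hd1 (by have := hD1_lt hn ho ; omega)
  unfold rr
  rw [kOf_ri hn, kOf_dd hn hd1, ZMod.natCast_rightInverse _]
  rw [mul_assoc, inv_mul_cancel₀ hdn, mul_one]

end KOf
open SimpleGraph in
/-- The `t`-th path subgraph. -/
def P (n : ℕ) (hn : n.Prime) (ho : Odd n) (t : ZMod n) : (rook n n).Subgraph where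
  verts := X n t '' Set.Iic (L n)
  Adj v w := ∃ j, j < L n ∧ s(v, w) = s(X n t j, X n t (j + 1))
  adj_sub := by
    rintro v w ⟨j, hj, he⟩
    rcases Sym2.eq_iff.1 he with ⟨h1, h2⟩ | ⟨h1, h2⟩
    · subst h1 ; subst h2 ; exact X_adj hn ho hj
    · subst h1 ; subst h2 ; exact (X_adj hn ho hj).symm
  edge_vert := by
    rintro v w ⟨j, hj, he⟩
    rcases Sym2.eq_iff.1 he with ⟨h1, h2⟩ | ⟨h1, h2⟩
    · exact ⟨j, Set.mem_Iic.2 (le_of_lt hj), h1.symm⟩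
    · exact ⟨j + 1, Set.mem_Iic.2 hj, h1.symm⟩
  symm := by
    constructor
    rintro v w ⟨j, hj, he⟩
    exact ⟨j, hj, by rw [Sym2.eq_swap] ; exact he⟩

section PLemmas
variable {n : ℕ} (hn : n.Prime) (ho : Odd n)

lemma P_adj (t : ZMod n) {v w : ZMod n × ZMod n} :
    (P n hn ho t).Adj v w ↔ ∃ j, j < L n ∧ s(v, w) = s(X n t j, X n t (j + 1)) :=
  Iff.rfl

lemma X_shift (s t : ZMod n) (j : ℕ) : shift n n s (X n t j) = X n (t + s) j := by
  unfold shift X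
  by_cases h : j % 2 = 0 <;> simp [h, add_assoc]

lemma P_map (s t : ZMod n) :
    (P n hn ho t).map (shiftHom n n s) = P n hn ho (t + s) := by
  have hfun : ∀ v, shiftHom n n s v = shift n n s v := fun _ => rfl
  apply SimpleGraph.Subgraph.ext
  · show (shiftHom n n s) '' (X n t '' Set.Iic (L n)) = X n (t + s) '' Set.Iic (L n)
    rw [Set.image_image]
    exact Set.image_congr (fun j _ => by rw [hfun, X_shift])
  · ext v w
    show Relation.Map (P n hn ho t).Adj (shiftHom n n s) (shiftHom n n s) v w ↔ _
    constructor
    · rintro ⟨a, b, ⟨j, hj, hab⟩, rfl, rfl⟩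
      refine ⟨j, hj, ?_⟩
      have := congrArg (Sym2.map (shiftHom n n s)) hab
      simpa only [Sym2.map_pair_eq, hfun, X_shift] using this
    · rintro ⟨j, hj, he⟩
      rcases Sym2.eq_iff.1 he with ⟨h1, h2⟩ | ⟨h1, h2⟩
      · exact ⟨X n t j, X n t (j + 1), ⟨j, hj, rfl⟩,
          by rw [hfun, X_shift] ; exact h1.symm, by rw [hfun, X_shift] ; exact h2.symm⟩
      · exact ⟨X n t (j + 1), X n t j, ⟨j, hj, by rw [Sym2.eq_swap]⟩,
          by rw [hfun, X_shift] ; exact h1.symm, by rw [hfun, X_shift] ; exact h2.symm⟩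

lemma P_iso (t : ZMod n) :
    Nonempty ((P n hn ho t).coe ≃g SimpleGraph.pathGraph (n * (n - 1) + 1)) := by
  have hL1 : n * (n - 1) = L n := rfl
  have hmem : ∀ i : Fin (n * (n - 1) + 1), X n t i.val ∈ (P n hn ho t).verts := by
    intro i
    exact ⟨i.val, Set.mem_Iic.2 (by have := i.isLt ; omega), rfl⟩
  let f : Fin (n * (n - 1) + 1) → (P n hn ho t).verts := fun i => ⟨X n t i.val, hmem i⟩
  have hbij : Function.Bijective f := by
    constructor
    · intro i j hij
      have := X_inj hn ho (t := t) (j := i.val) (j' := j.val)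
        (by have := i.isLt ; omega) (by have := j.isLt ; omega)
        (congrArg Subtype.val hij)
      exact Fin.ext this
    · rintro ⟨v, j, hj, rfl⟩
      have hj' : j ≤ L n := Set.mem_Iic.1 hj
      exact ⟨⟨j, by omega⟩, rfl⟩
  let e := Equiv.ofBijective f hbij
  have hval : ∀ i, (e i).val = X n t i.val := fun _ => rfl
  refine ⟨(RelIso.mk e ?_).symm⟩
  intro a b
  show (P n hn ho t).Adj (e a).val (e b).val ↔ _
  rw [hval, hval, SimpleGraph.pathGraph_adj]
  constructor
  · rintro ⟨j, hj, he⟩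
    rcases Sym2.eq_iff.1 he with ⟨h1, h2⟩ | ⟨h1, h2⟩
    · have e1 := X_inj hn ho (t := t) (j := a.val) (j' := j)
        (by have := a.isLt ; omega) (by omega) h1
      have e2 := X_inj hn ho (t := t) (j := b.val) (j' := j + 1)
        (by have := b.isLt ; omega) (by omega) h2
      omega
    · have e1 := X_inj hn ho (t := t) (j := a.val) (j' := j + 1)
        (by have := a.isLt ; omega) (by omega) h1
      have e2 := X_inj hn ho (t := t) (j := b.val) (j' := j)
        (by have := b.isLt ; omega) (by omega) h2
      omega
  · rintro (h | h)
    · have ha : (a : ℕ) + 1 = (b : ℕ) := h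
      refine ⟨a.val, by have hb := b.isLt ; omega, ?_⟩
      rw [ha]
    · have hb : (b : ℕ) + 1 = (a : ℕ) := h
      refine ⟨b.val, by have ha := a.isLt ; omega, ?_⟩
      rw [hb, Sym2.eq_swap]

end PLemmas
section Unique
variable {n : ℕ} (hn : n.Prime) (ho : Odd n) {t : ZMod n} {v w : ZMod n × ZMod n}

include hn ho

lemma shape_h (hsnd : v.2 = w.2) {j : ℕ} (hj : j < L n)
    (he : s(v, w) = s(X n t j, X n t (j + 1))) :
    ∃ k, k < M n ∧ rr n k = v.2 ∧
      ((v.1 = aa n k + t ∧ w.1 = 2 * rr n k + ((dd n k : ℕ) : ZMod n) + t) ∨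
       (w.1 = aa n k + t ∧ v.1 = 2 * rr n k + ((dd n k : ℕ) : ZMod n) + t)) := by
  have hL := L_eq hn ho
  rcases Nat.even_or_odd j with ⟨m, hm⟩ | ⟨m, hm⟩
  · have hk : j / 2 < M n := by omega
    rw [X_even (by omega : j % 2 = 0), X_odd (by omega : (j + 1) % 2 = 1),
      (by omega : (j + 1) / 2 = j / 2), aa_succ hn hk] at he
    rcases Sym2.eq_iff.1 he with ⟨h1, h2⟩ | ⟨h1, h2⟩
    · exact ⟨j / 2, hk, (congrArg Prod.snd h1).symm,
        Or.inl ⟨congrArg Prod.fst h1, congrArg Prod.fst h2⟩⟩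
    · refine ⟨j / 2, hk, ?_, Or.inr ⟨congrArg Prod.fst h2, congrArg Prod.fst h1⟩⟩
      rw [hsnd]
      exact (congrArg Prod.snd h2).symm
  · exfalso
    have hk : j / 2 < M n := by omega
    rw [X_odd (by omega : j % 2 = 1), X_even (by omega : (j + 1) % 2 = 0),
      (by omega : (j + 1) / 2 = j / 2 + 1), rr_succ hn hk] at he
    have hdz := ddcast_ne_zero hn ho (le_of_lt hk)
    rcases Sym2.eq_iff.1 he with ⟨h1, h2⟩ | ⟨h1, h2⟩
    · have e1 := congrArg Prod.snd h1
      have e2 := congrArg Prod.snd h2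
      rw [hsnd] at e1
      exact hdz (by linear_combination e1 - e2)
    · have e1 := congrArg Prod.snd h1
      have e2 := congrArg Prod.snd h2
      rw [hsnd] at e1
      exact hdz (by linear_combination e2 - e1)

lemma shape_v (hsnd : v.2 ≠ w.2) {j : ℕ} (hj : j < L n)
    (he : s(v, w) = s(X n t j, X n t (j + 1))) :
    ∃ k, k < M n ∧ v.1 = 2 * rr n k + ((dd n k : ℕ) : ZMod n) + t ∧
      ((v.2 = rr n k ∧ w.2 = rr n k + ((dd n k : ℕ) : ZMod n)) ∨
       (w.2 = rr n k ∧ v.2 = rr n k + ((dd n k : ℕ) : ZMod n))) := by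
  have hL := L_eq hn ho
  rcases Nat.even_or_odd j with ⟨m, hm⟩ | ⟨m, hm⟩
  · exfalso
    rw [X_even (by omega : j % 2 = 0), X_odd (by omega : (j + 1) % 2 = 1),
      (by omega : (j + 1) / 2 = j / 2)] at he
    rcases Sym2.eq_iff.1 he with ⟨h1, h2⟩ | ⟨h1, h2⟩ <;>
      exact hsnd ((congrArg Prod.snd h1).trans (congrArg Prod.snd h2).symm)
  · have hk : j / 2 < M n := by omega
    rw [X_odd (by omega : j % 2 = 1), X_even (by omega : (j + 1) % 2 = 0),
      (by omega : (j + 1) / 2 = j / 2 + 1), rr_succ hn hk, aa_succ hn hk] at he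
    rcases Sym2.eq_iff.1 he with ⟨h1, h2⟩ | ⟨h1, h2⟩
    · exact ⟨j / 2, hk, congrArg Prod.fst h1,
        Or.inl ⟨congrArg Prod.snd h1, congrArg Prod.snd h2⟩⟩
    · exact ⟨j / 2, hk, congrArg Prod.fst h1,
        Or.inr ⟨congrArg Prod.snd h2, congrArg Prod.snd h1⟩⟩

lemma uniq_h (hsnd : v.2 = w.2) {t t' : ZMod n} {j j' : ℕ}
    (hj : j < L n) (hj' : j' < L n)
    (he : s(v, w) = s(X n t j, X n t (j + 1)))
    (he' : s(v, w) = s(X n t' j', X n t' (j' + 1))) : t = t' := by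
  haveI : Fact n.Prime := ⟨hn⟩
  obtain ⟨k, hk, hrk, hor⟩ := shape_h hn ho hsnd hj he
  obtain ⟨k', hk', hrk', hor'⟩ := shape_h hn ho hsnd hj' he'
  have h2z := two_ne_zero' hn ho
  have hd1 := dd_pos (n := n) (k := k)
  have hd1' := dd_pos (n := n) (k := k')
  have hd2 := dd_le_of_lt hn hk
  have hd2' := dd_le_of_lt hn hk'
  by_cases hb : v.2 = 0
  · have h0 : ri n k = 0 := (rr_zero_iff hn ho (le_of_lt hk)).1 (by rw [hrk, hb])
    have h0' : ri n k' = 0 := (rr_zero_iff hn ho (le_of_lt hk')).1 (by rw [hrk', hb])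
    have hq : aa n k = 2 * rr n k - ((dd n k : ℕ) : ZMod n) + 1 := by
      unfold aa ; rw [if_pos h0]
    have hq' : aa n k' = 2 * rr n k' - ((dd n k' : ℕ) : ZMod n) + 1 := by
      unfold aa ; rw [if_pos h0']
    have hr0 : rr n k = 0 := rr_of_ri_zero h0
    have hr0' : rr n k' = 0 := rr_of_ri_zero h0'
    rw [hq, hr0] at hor
    rw [hq', hr0'] at hor'
    rcases hor with ⟨hv, hw⟩ | ⟨hv, hw⟩ <;> rcases hor' with ⟨hv', hw'⟩ | ⟨hv', hw'⟩
    · have hd : ((dd n k : ℕ) : ZMod n) = ((dd n k' : ℕ) : ZMod n) :=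
        mul_left_cancel₀ h2z (by linear_combination hv - hw - hv' + hw')
      linear_combination hv' - hv + hd
    · exact absurd (mul_left_cancel₀ h2z
        (by linear_combination hv - hw + hv' - hw' : 2 * (((dd n k : ℕ) : ZMod n) + ((dd n k' : ℕ) : ZMod n)) = 2 * 1))
        (sum_ne_one hn ho hd1 (by omega) hd1' hd2')
    · exact absurd (mul_left_cancel₀ h2z
        (by linear_combination hv - hw + hv' - hw' : 2 * (((dd n k : ℕ) : ZMod n) + ((dd n k' : ℕ) : ZMod n)) = 2 * 1))
        (sum_ne_one hn ho hd1 (by omega) hd1' hd2')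
    · have hd : ((dd n k : ℕ) : ZMod n) = ((dd n k' : ℕ) : ZMod n) :=
        mul_left_cancel₀ h2z (by linear_combination hv - hw - hv' + hw')
      linear_combination hv' - hv + hd
  · have h0 : ri n k ≠ 0 := fun h => hb (by rw [← hrk] ; exact rr_of_ri_zero h)
    have h0' : ri n k' ≠ 0 := fun h => hb (by rw [← hrk'] ; exact rr_of_ri_zero h)
    have hq : aa n k = 2 * rr n k - ((dd n k : ℕ) : ZMod n) := by
      unfold aa ; rw [if_neg h0] ; ring
    have hq' : aa n k' = 2 * rr n k' - ((dd n k' : ℕ) : ZMod n) := by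
      unfold aa ; rw [if_neg h0'] ; ring
    rw [hq, hrk] at hor
    rw [hq', hrk'] at hor'
    rcases hor with ⟨hv, hw⟩ | ⟨hv, hw⟩ <;> rcases hor' with ⟨hv', hw'⟩ | ⟨hv', hw'⟩
    · have hd : ((dd n k : ℕ) : ZMod n) = ((dd n k' : ℕ) : ZMod n) :=
        mul_left_cancel₀ h2z (by linear_combination hv - hw - hv' + hw')
      linear_combination hv' - hv + hd
    · exact absurd (mul_left_cancel₀ h2z
        (by linear_combination hv - hw + hv' - hw' : 2 * (((dd n k : ℕ) : ZMod n) + ((dd n k' : ℕ) : ZMod n)) = 2 * 0))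
        (by simpa using sum_ne_zero hn ho hd1 hd2 hd1' hd2')
    · exact absurd (mul_left_cancel₀ h2z
        (by linear_combination hv - hw + hv' - hw' : 2 * (((dd n k : ℕ) : ZMod n) + ((dd n k' : ℕ) : ZMod n)) = 2 * 0))
        (by simpa using sum_ne_zero hn ho hd1 hd2 hd1' hd2')
    · have hd : ((dd n k : ℕ) : ZMod n) = ((dd n k' : ℕ) : ZMod n) :=
        mul_left_cancel₀ h2z (by linear_combination hv - hw - hv' + hw')
      linear_combination hv' - hv + hd

lemma uniq_v (hsnd : v.2 ≠ w.2) {t t' : ZMod n} {j j' : ℕ}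
    (hj : j < L n) (hj' : j' < L n)
    (he : s(v, w) = s(X n t j, X n t (j + 1)))
    (he' : s(v, w) = s(X n t' j', X n t' (j' + 1))) : t = t' := by
  haveI : Fact n.Prime := ⟨hn⟩
  obtain ⟨k, hk, hcol, hor⟩ := shape_v hn ho hsnd hj he
  obtain ⟨k', hk', hcol', hor'⟩ := shape_v hn ho hsnd hj' he'
  have hd1 := dd_pos (n := n) (k := k)
  have hd1' := dd_pos (n := n) (k := k')
  have hd2 := dd_le_of_lt hn hk
  have hd2' := dd_le_of_lt hn hk'
  rcases hor with ⟨hv, hw⟩ | ⟨hv, hw⟩ <;> rcases hor' with ⟨hv', hw'⟩ | ⟨hv', hw'⟩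
  · have hd : ((dd n k : ℕ) : ZMod n) = ((dd n k' : ℕ) : ZMod n) := by
      linear_combination hv - hw - hv' + hw'
    linear_combination hcol' - hcol - hd + 2 * hv - 2 * hv'
  · exact absurd (by linear_combination hv - hw + hv' - hw' :
      ((dd n k : ℕ) : ZMod n) + ((dd n k' : ℕ) : ZMod n) = 0)
      (sum_ne_zero hn ho hd1 hd2 hd1' hd2')
  · exact absurd (by linear_combination hv - hw + hv' - hw' :
      ((dd n k : ℕ) : ZMod n) + ((dd n k' : ℕ) : ZMod n) = 0)
      (sum_ne_zero hn ho hd1 hd2 hd1' hd2')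
  · have hd : ((dd n k : ℕ) : ZMod n) = ((dd n k' : ℕ) : ZMod n) := by
      linear_combination hv - hw - hv' + hw'
    linear_combination hcol' - hcol - hd + 2 * hv - 2 * hv'

end Unique
section Exists2
variable {n : ℕ} (hn : n.Prime) (ho : Odd n) {v w : ZMod n × ZMod n}

include hn ho

lemma exists_t (hadj : (rook n n).Adj v w) :
    ∃ t : ZMod n, ∃ j, j < L n ∧ s(v, w) = s(X n t j, X n t (j + 1)) := by
  haveI : Fact n.Prime := ⟨hn⟩
  obtain ⟨hvw, horr⟩ := hadj
  have hL := L_eq hn ho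
  have hDlt := hD1_lt hn ho
  by_cases hsnd : v.2 = w.2
  · have hne : v.1 ≠ w.1 := fun h => hvw (Prod.ext h hsnd)
    have hz : w.1 - v.1 ≠ 0 := sub_ne_zero.2 (Ne.symm hne)
    by_cases hb : v.2 = 0
    · obtain ⟨d, hd1, hd2, hc⟩ := exOdd hn ho hz
      have hkM : kOf n v.2 d < M n := kOf_lt hn hd1 hd2
      set k := kOf n v.2 d with hkdef
      have hrrk : rr n k = v.2 := kOf_rr hn ho hd1 hd2
      have hdd : dd n k = d := kOf_dd hn hd1
      have h0 : ri n k = 0 := by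
        rw [hkdef, kOf_ri hn, hb] ; simp
      have haa : aa n k = 2 * v.2 - (d : ZMod n) + 1 := by
        unfold aa ; rw [if_pos h0, hrrk, hdd]
      have haa1 : aa n (k + 1) = 2 * v.2 + (d : ZMod n) := by
        rw [aa_succ hn hkM, hrrk, hdd]
      rcases hc with hc | hc
      · refine ⟨v.1 - aa n k, 2 * k, by omega, ?_⟩
        have h1 : X n (v.1 - aa n k) (2 * k) = v := by
          rw [X_even (by omega : (2 * k) % 2 = 0), (by omega : 2 * k / 2 = k)]
          exact Prod.ext (by ring) hrrk
        have h2 : X n (v.1 - aa n k) (2 * k + 1) = w := by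
          rw [X_odd (by omega : (2 * k + 1) % 2 = 1), (by omega : (2 * k + 1) / 2 = k)]
          refine Prod.ext ?_ (by rw [hrrk, hsnd])
          show aa n (k + 1) + (v.1 - aa n k) = w.1
          rw [haa1, haa] ; linear_combination -hc
        rw [h1, h2]
      · refine ⟨w.1 - aa n k, 2 * k, by omega, ?_⟩
        have h1 : X n (w.1 - aa n k) (2 * k) = w := by
          rw [X_even (by omega : (2 * k) % 2 = 0), (by omega : 2 * k / 2 = k)]
          exact Prod.ext (by ring) (hrrk.trans hsnd)
        have h2 : X n (w.1 - aa n k) (2 * k + 1) = v := by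
          rw [X_odd (by omega : (2 * k + 1) % 2 = 1), (by omega : (2 * k + 1) / 2 = k)]
          refine Prod.ext ?_ hrrk
          show aa n (k + 1) + (w.1 - aa n k) = v.1
          rw [haa1, haa] ; linear_combination hc
        rw [h1, h2, Sym2.eq_swap]
    · obtain ⟨d, hd1, hd2, hc⟩ := ex2 hn ho hz
      have hdnz : ((d : ℕ) : ZMod n) ≠ 0 := cast_ne_zero hn hd1 (by omega)
      have hkM : kOf n v.2 d < M n := kOf_lt hn hd1 hd2
      set k := kOf n v.2 d with hkdef
      have hrrk : rr n k = v.2 := kOf_rr hn ho hd1 hd2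
      have hdd : dd n k = d := kOf_dd hn hd1
      have h0 : ri n k ≠ 0 := by
        rw [hkdef, kOf_ri hn]
        intro h
        have : v.2 * ((d : ZMod n))⁻¹ = 0 := by
          have := ZMod.natCast_rightInverse (n := n) (v.2 * ((d : ZMod n))⁻¹)
          rw [← this, h] ; simp
        rcases mul_eq_zero.1 this with h' | h'
        · exact hb h'
        · exact hdnz (by rw [← inv_inv ((d : ℕ) : ZMod n), h'] ; simp)
      have haa : aa n k = 2 * v.2 - (d : ZMod n) := by
        unfold aa ; rw [if_neg h0, hrrk, hdd] ; ring
      have haa1 : aa n (k + 1) = 2 * v.2 + (d : ZMod n) := by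
        rw [aa_succ hn hkM, hrrk, hdd]
      rcases hc with hc | hc
      · refine ⟨v.1 - aa n k, 2 * k, by omega, ?_⟩
        have h1 : X n (v.1 - aa n k) (2 * k) = v := by
          rw [X_even (by omega : (2 * k) % 2 = 0), (by omega : 2 * k / 2 = k)]
          exact Prod.ext (by ring) hrrk
        have h2 : X n (v.1 - aa n k) (2 * k + 1) = w := by
          rw [X_odd (by omega : (2 * k + 1) % 2 = 1), (by omega : (2 * k + 1) / 2 = k)]
          refine Prod.ext ?_ (by rw [hrrk, hsnd])
          show aa n (k + 1) + (v.1 - aa n k) = w.1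
          rw [haa1, haa] ; linear_combination -hc
        rw [h1, h2]
      · refine ⟨w.1 - aa n k, 2 * k, by omega, ?_⟩
        have h1 : X n (w.1 - aa n k) (2 * k) = w := by
          rw [X_even (by omega : (2 * k) % 2 = 0), (by omega : 2 * k / 2 = k)]
          exact Prod.ext (by ring) (hrrk.trans hsnd)
        have h2 : X n (w.1 - aa n k) (2 * k + 1) = v := by
          rw [X_odd (by omega : (2 * k + 1) % 2 = 1), (by omega : (2 * k + 1) / 2 = k)]
          refine Prod.ext ?_ hrrk
          show aa n (k + 1) + (w.1 - aa n k) = v.1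
          rw [haa1, haa] ; linear_combination hc
        rw [h1, h2, Sym2.eq_swap]
  · have hfst : v.1 = w.1 := horr.resolve_right hsnd
    have hz : w.2 - v.2 ≠ 0 := sub_ne_zero.2 (fun h => hsnd h.symm)
    obtain ⟨d, hd1, hd2, hc | hc⟩ := exD hn ho hz
    · have hkM : kOf n v.2 d < M n := kOf_lt hn hd1 hd2
      set k := kOf n v.2 d with hkdef
      have hrrk : rr n k = v.2 := kOf_rr hn ho hd1 hd2
      have hdd : dd n k = d := kOf_dd hn hd1
      have haa1 : aa n (k + 1) = 2 * v.2 + (d : ZMod n) := by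
        rw [aa_succ hn hkM, hrrk, hdd]
      have hrs : rr n (k + 1) = v.2 + (d : ZMod n) := by
        rw [rr_succ hn hkM, hrrk, hdd]
      refine ⟨v.1 - (2 * v.2 + (d : ZMod n)), 2 * k + 1, by omega, ?_⟩
      have h1 : X n (v.1 - (2 * v.2 + (d : ZMod n))) (2 * k + 1) = v := by
        rw [X_odd (by omega : (2 * k + 1) % 2 = 1), (by omega : (2 * k + 1) / 2 = k)]
        refine Prod.ext ?_ hrrk
        show aa n (k + 1) + (v.1 - (2 * v.2 + (d : ZMod n))) = v.1
        rw [haa1] ; ring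
      have h2 : X n (v.1 - (2 * v.2 + (d : ZMod n))) (2 * k + 1 + 1) = w := by
        rw [X_even (by omega : (2 * k + 1 + 1) % 2 = 0), (by omega : (2 * k + 1 + 1) / 2 = k + 1)]
        refine Prod.ext ?_ ?_
        · show aa n (k + 1) + (v.1 - (2 * v.2 + (d : ZMod n))) = w.1
          rw [haa1, ← hfst] ; ring
        · show rr n (k + 1) = w.2
          rw [hrs] ; linear_combination -hc
      rw [h1, h2]
    · have hkM : kOf n w.2 d < M n := kOf_lt hn hd1 hd2
      set k := kOf n w.2 d with hkdef
      have hrrk : rr n k = w.2 := kOf_rr hn ho hd1 hd2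
      have hdd : dd n k = d := kOf_dd hn hd1
      have haa1 : aa n (k + 1) = 2 * w.2 + (d : ZMod n) := by
        rw [aa_succ hn hkM, hrrk, hdd]
      have hrs : rr n (k + 1) = w.2 + (d : ZMod n) := by
        rw [rr_succ hn hkM, hrrk, hdd]
      refine ⟨v.1 - (2 * w.2 + (d : ZMod n)), 2 * k + 1, by omega, ?_⟩
      have h1 : X n (v.1 - (2 * w.2 + (d : ZMod n))) (2 * k + 1) = w := by
        rw [X_odd (by omega : (2 * k + 1) % 2 = 1), (by omega : (2 * k + 1) / 2 = k)]
        refine Prod.ext ?_ hrrk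
        show aa n (k + 1) + (v.1 - (2 * w.2 + (d : ZMod n))) = w.1
        rw [haa1, hfst] ; ring
      have h2 : X n (v.1 - (2 * w.2 + (d : ZMod n))) (2 * k + 1 + 1) = v := by
        rw [X_even (by omega : (2 * k + 1 + 1) % 2 = 0), (by omega : (2 * k + 1 + 1) / 2 = k + 1)]
        refine Prod.ext ?_ ?_
        · show aa n (k + 1) + (v.1 - (2 * w.2 + (d : ZMod n))) = v.1
          rw [haa1] ; ring
        · show rr n (k + 1) = v.2
          rw [hrs] ; linear_combination hc
      rw [h1, h2, Sym2.eq_swap]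

lemma unique_t (hadj : (rook n n).Adj v w) :
    ∃! t : ZMod n, ∃ j, j < L n ∧ s(v, w) = s(X n t j, X n t (j + 1)) := by
  obtain ⟨t, ht⟩ := exists_t hn ho hadj
  refine ⟨t, ht, ?_⟩
  intro t' ht'
  obtain ⟨j, hj, he⟩ := ht
  obtain ⟨j', hj', he'⟩ := ht'
  by_cases hsnd : v.2 = w.2
  · exact uniq_h hn ho hsnd hj' hj he' he
  · exact uniq_v hn ho hsnd hj' hj he' he

end Exists2

end TPD

open SimpleGraph in
/-- For every odd prime `n`, the graph `K_n □ K_n` admits a decomposition into `n`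
paths, each of length `n(n-1)` (so with `n(n-1)+1` vertices), that is transitive
under the cyclic group of order `n` acting by `(a,b) ↦ (a+1,b)`. -/
theorem transitive_path_decomposition (n : ℕ) (hn : n.Prime) (ho : Odd n) :
    ∃ D : Finset ((rook n n).Subgraph),
      D.card = n ∧
      (∀ B ∈ D, Nonempty (B.coe ≃g pathGraph (n * (n - 1) + 1))) ∧
      (∀ e ∈ (rook n n).edgeSet, ∃! B, B ∈ D ∧ e ∈ B.edgeSet) ∧
      (∀ t : ZMod n, ∀ B ∈ D, B.map (shiftHom n n t) ∈ D) ∧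
      (∀ B ∈ D, ∀ C ∈ D, ∃ t : ZMod n, B.map (shiftHom n n t) = C) := by
  classical
  haveI : NeZero n := ⟨hn.pos.ne'⟩
  have hL0 : 0 < TPD.L n := by
    have h3 := TPD.three_le hn ho
    exact Nat.mul_pos hn.pos (by omega)
  refine ⟨Finset.image (fun t => TPD.P n hn ho t) Finset.univ, ?_, ?_, ?_, ?_, ?_⟩
  · rw [Finset.card_image_of_injective _ ?inj, Finset.card_univ, ZMod.card]
    case inj =>
      intro t t' hPt
      simp only [] at hPt
      have hadj := TPD.X_adj hn ho (t := t) (j := 0) hL0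
      have h1 : (TPD.P n hn ho t).Adj (TPD.X n t 0) (TPD.X n t 1) := ⟨0, hL0, rfl⟩
      rw [show TPD.P n hn ho t = TPD.P n hn ho t' from hPt] at h1
      obtain ⟨j', hj', he'⟩ := h1
      exact (TPD.unique_t hn ho hadj).unique ⟨0, hL0, rfl⟩ ⟨j', hj', he'⟩
  · intro B hB
    obtain ⟨t, -, rfl⟩ := Finset.mem_image.1 hB
    exact TPD.P_iso hn ho t
  · intro e he
    induction e using Sym2.ind with
    | _ v w =>
      rw [SimpleGraph.mem_edgeSet] at he
      obtain ⟨t, ht, hun⟩ := TPD.unique_t hn ho he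
      refine ⟨TPD.P n hn ho t, ⟨Finset.mem_image_of_mem _ (Finset.mem_univ t), ht⟩, ?_⟩
      rintro B' ⟨hB', hmem⟩
      obtain ⟨t', -, rfl⟩ := Finset.mem_image.1 hB'
      rw [hun t' hmem]
  · intro t B hB
    obtain ⟨s, -, rfl⟩ := Finset.mem_image.1 hB
    rw [TPD.P_map hn ho t s]
    exact Finset.mem_image_of_mem _ (Finset.mem_univ _)
  · intro B hB C hC
    obtain ⟨s, -, rfl⟩ := Finset.mem_image.1 hB
    obtain ⟨s', -, rfl⟩ := Finset.mem_image.1 hC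
    refine ⟨s' - s, ?_⟩
    rw [TPD.P_map hn ho (s' - s) s]
    have : s + (s' - s) = s' := by ring
    rw [this]
end

section
/- For every odd prime n, the edge set of K_n □ K_n can be partitioned into n paths. In particular, since K_n □ K_n has n² vertices, it can be decomposed into at most √(n²) = n paths, confirming Gallai's conjecture for these graphs. -/
namespace GR
open SimpleGraph

variable {n : ℕ}

/-- The step `α_d = 1 - 2d` of block `d`. -/
def al (n d : ℕ) : ZMod n := 1 - 2 * (d : ZMod n)

/-- Vertex of the base path with "half-index" `k` and parity `r`. -/
def pvk (n k r : ℕ) : ZMod n × ZMod n :=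
  ((1 : ZMod n) - ((k / n + 1 : ℕ) : ZMod n) + ((k % n : ℕ) : ZMod n) * al n (k / n + 1),
    ((k % n + r : ℕ) : ZMod n) * al n (k / n + 1))

/-- The `i`-th vertex of the base path. -/
def pv (n i : ℕ) : ZMod n × ZMod n := pvk n (i / 2) (i % 2)

/-- The `i`-th vertex of the path translated by `t`. -/
def pf (n : ℕ) (t : ZMod n) (i : ℕ) : ZMod n × ZMod n := ((pv n i).1 + t, (pv n i).2)

/-- The edge between path positions `p` and `p+1` (of the `t`-translate) is `{v, w}`. -/
def Match (n : ℕ) (t : ZMod n) (p : ℕ) (v w : ZMod n × ZMod n) : Prop :=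
  (v = pf n t p ∧ w = pf n t (p + 1)) ∨ (w = pf n t p ∧ v = pf n t (p + 1))

lemma nfacts (hp : n.Prime) (ho : Odd n) : n = 2 * (n / 2) + 1 ∧ 3 ≤ n := by
  have h1 := hp.two_le
  have h2 := Nat.odd_iff.1 ho
  omega

lemma cast_inj_lt {a b : ℕ} (ha : a < n) (hb : b < n) (h : (a : ZMod n) = b) : a = b := by
  have h2 := (ZMod.natCast_eq_natCast_iff' a b n).1 h
  rwa [Nat.mod_eq_of_lt ha, Nat.mod_eq_of_lt hb] at h2

lemma mod_small {a b : ℕ} (ha : a < n) (hb : b < 2 * n) (h : (b : ZMod n) = a) :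
    b = a ∨ b = a + n := by
  have h2 := (ZMod.natCast_eq_natCast_iff' b a n).1 h
  rw [Nat.mod_eq_of_lt ha] at h2
  rcases Nat.lt_or_ge b n with hb' | hb'
  · left; rwa [Nat.mod_eq_of_lt hb'] at h2
  · right
    rw [Nat.mod_eq_sub_mod hb', Nat.mod_eq_of_lt (by omega)] at h2
    omega

lemma cast_inj_le {a b : ℕ} (ha1 : 1 ≤ a) (ha : a ≤ n) (hb1 : 1 ≤ b) (hb : b ≤ n)
    (h : (a : ZMod n) = b) : a = b := by
  have h2 := (ZMod.natCast_eq_natCast_iff' a b n).1 h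
  rcases Nat.lt_or_ge a n with ha' | ha' <;> rcases Nat.lt_or_ge b n with hb' | hb'
  · rwa [Nat.mod_eq_of_lt ha', Nat.mod_eq_of_lt hb'] at h2
  · have hbn : b = n := by omega
    subst hbn
    rw [Nat.mod_eq_of_lt ha', Nat.mod_self] at h2; omega
  · have han : a = n := by omega
    subst han
    rw [Nat.mod_eq_of_lt hb', Nat.mod_self] at h2; omega
  · omega

section Classes

lemma al_ne_zero (hp : n.Prime) (ho : Odd n) {d : ℕ} (hd1 : 1 ≤ d) (hd2 : d ≤ n / 2) : al n d ≠ 0 := by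
  intro h
  obtain ⟨hm, h3⟩ := nfacts hp ho
  have h2 : ((2 * d : ℕ) : ZMod n) = ((1 : ℕ) : ZMod n) := by
    push_cast
    simp only [al] at h
    linear_combination -h
  have := cast_inj_lt (by omega) (by omega) h2
  omega

lemma al_inj (hp : n.Prime) (ho : Odd n) {d d' : ℕ} (hd1 : 1 ≤ d) (hd2 : d ≤ n / 2) (hd1' : 1 ≤ d') (hd2' : d' ≤ n / 2)
    (h : al n d = al n d') : d = d' := by
  obtain ⟨hm, h3⟩ := nfacts hp ho
  have h2 : ((2 * d : ℕ) : ZMod n) = ((2 * d' : ℕ) : ZMod n) := by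
    push_cast
    simp only [al] at h
    linear_combination -h
  have := cast_inj_lt (by omega) (by omega) h2
  omega

lemma al_ne_neg (hp : n.Prime) (ho : Odd n) {d d' : ℕ} (hd1 : 1 ≤ d) (hd2 : d ≤ n / 2) (hd1' : 1 ≤ d') (hd2' : d' ≤ n / 2)
    (h : al n d = -al n d') : False := by
  obtain ⟨hm, h3⟩ := nfacts hp ho
  have h2 : ((2 * d + 2 * d' : ℕ) : ZMod n) = ((2 : ℕ) : ZMod n) := by
    push_cast
    simp only [al] at h
    linear_combination -h
  have := mod_small (a := 2) (by omega) (by omega) h2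
  omega

lemma two_inj (hp : n.Prime) (ho : Odd n) {d d' : ℕ} (hd1 : 1 ≤ d) (hd2 : d ≤ n / 2) (hd1' : 1 ≤ d') (hd2' : d' ≤ n / 2)
    (h : ((2 * d : ℕ) : ZMod n) = ((2 * d' : ℕ) : ZMod n)) : d = d' := by
  obtain ⟨hm, h3⟩ := nfacts hp ho
  have := cast_inj_lt (by omega) (by omega) h
  omega

lemma two_ne_neg (hp : n.Prime) (ho : Odd n) {d d' : ℕ} (hd1 : 1 ≤ d) (hd2 : d ≤ n / 2) (hd1' : 1 ≤ d') (hd2' : d' ≤ n / 2)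
    (h : ((2 * d : ℕ) : ZMod n) = -((2 * d' : ℕ) : ZMod n)) : False := by
  obtain ⟨hm, h3⟩ := nfacts hp ho
  have h2 : ((2 * d + 2 * d' : ℕ) : ZMod n) = ((0 : ℕ) : ZMod n) := by
    push_cast at h ⊢
    linear_combination h
  have := mod_small (a := 0) (by omega) (by omega) h2
  omega

lemma twod_ne_zero (hp : n.Prime) (ho : Odd n) {d : ℕ} (hd1 : 1 ≤ d) (hd2 : d ≤ n / 2) :
    ((2 * d : ℕ) : ZMod n) ≠ 0 := by
  intro h
  obtain ⟨hm, h3⟩ := nfacts hp ho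
  have h2 : ((2 * d : ℕ) : ZMod n) = ((0 : ℕ) : ZMod n) := by rw [h]; norm_num
  have := cast_inj_lt (by omega) (by omega) h2
  omega

lemma exists_odd_class (hp : n.Prime) (ho : Odd n) {u : ZMod n} (hu : u ≠ 0) :
    ∃ d, 1 ≤ d ∧ d ≤ n / 2 ∧ (u = al n d ∨ u = -al n d) := by
  haveI : NeZero n := ⟨hp.ne_zero⟩
  obtain ⟨hm, h3⟩ := nfacts hp ho
  have hc : ((u.val : ℕ) : ZMod n) = u := by rw [ZMod.natCast_val, ZMod.cast_id]
  have hc1 : 1 ≤ u.val := Nat.one_le_iff_ne_zero.2 (fun h => hu (by rw [← hc, h]; simp))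
  have hcn : u.val < n := ZMod.val_lt u
  rcases Nat.even_or_odd u.val with he | hodd
  · -- u.val even : u = al n d with 2*d - 1 = n - u.val
    obtain ⟨c, hce⟩ := he
    refine ⟨(n - u.val + 1) / 2, by omega, by omega, Or.inl ?_⟩
    have he1 : (2 * ((n - u.val + 1) / 2) : ℕ) = n - u.val + 1 := by omega
    have he2 : ((n - u.val : ℕ) : ZMod n) = -u := by
      rw [Nat.cast_sub (by omega), ZMod.natCast_self, hc]; ring
    simp only [al]
    have : ((2 * ((n - u.val + 1) / 2) : ℕ) : ZMod n) = -u + 1 := by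
      rw [he1]; push_cast [Nat.cast_sub (le_of_lt hcn)]
      rw [ZMod.natCast_self, hc]; ring
    push_cast at this ⊢
    linear_combination this
  · -- u.val odd : u = -al n d with 2*d-1 = u.val
    obtain ⟨c, hce⟩ := hodd
    refine ⟨(u.val + 1) / 2, by omega, by omega, Or.inr ?_⟩
    have he1 : (2 * ((u.val + 1) / 2) : ℕ) = u.val + 1 := by omega
    simp only [al]
    have : ((2 * ((u.val + 1) / 2) : ℕ) : ZMod n) = u + 1 := by
      rw [he1]; push_cast [hc]; ring
    push_cast at this ⊢
    linear_combination -this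

lemma exists_even_class (hp : n.Prime) (ho : Odd n) {u : ZMod n} (hu : u ≠ 0) :
    ∃ d, 1 ≤ d ∧ d ≤ n / 2 ∧ (u = ((2 * d : ℕ) : ZMod n) ∨ u = -((2 * d : ℕ) : ZMod n)) := by
  haveI : NeZero n := ⟨hp.ne_zero⟩
  obtain ⟨hm, h3⟩ := nfacts hp ho
  have hc : ((u.val : ℕ) : ZMod n) = u := by rw [ZMod.natCast_val, ZMod.cast_id]
  have hc1 : 1 ≤ u.val := Nat.one_le_iff_ne_zero.2 (fun h => hu (by rw [← hc, h]; simp))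
  have hcn : u.val < n := ZMod.val_lt u
  rcases Nat.even_or_odd u.val with he | hodd
  · obtain ⟨c, hce⟩ := he
    refine ⟨u.val / 2, by omega, by omega, Or.inl ?_⟩
    have he1 : (2 * (u.val / 2) : ℕ) = u.val := by omega
    rw [he1, hc]
  · obtain ⟨c, hce⟩ := hodd
    refine ⟨(n - u.val) / 2, by omega, by omega, Or.inr ?_⟩
    have he1 : (2 * ((n - u.val) / 2) : ℕ) = n - u.val := by omega
    rw [he1, Nat.cast_sub (le_of_lt hcn), ZMod.natCast_self, hc]; ring

lemma castj_inj (hp : n.Prime) {d j j' : ℕ} (hal : al n d ≠ 0) (hj : j < n) (hj' : j' < n)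
    (h : (j : ZMod n) * al n d = (j' : ZMod n) * al n d) : j = j' := by
  haveI := Fact.mk hp
  exact cast_inj_lt hj hj' (mul_right_cancel₀ hal h)

end Classes

/-! ### Evaluation lemmas -/

lemma kdiv (h0 : 0 < n) {c j : ℕ} (hj : j < n) :
    (c * n + j) / n = c ∧ (c * n + j) % n = j := by
  constructor
  · rw [Nat.mul_comm c n, Nat.mul_add_div h0, Nat.div_eq_of_lt hj, Nat.add_zero]
  · rw [Nat.mul_comm c n, Nat.mul_add_mod, Nat.mod_eq_of_lt hj]

lemma pvk_eval (h0 : 0 < n) {d j : ℕ} (hd : 1 ≤ d) (hj : j < n) (r : ℕ) :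
    pvk n ((d - 1) * n + j) r =
      (1 - (d : ZMod n) + (j : ZMod n) * al n d, ((j + r : ℕ) : ZMod n) * al n d) := by
  obtain ⟨h1, h2⟩ := kdiv h0 (c := d - 1) hj
  have h3 : d - 1 + 1 = d := by omega
  simp only [pvk, h1, h2, h3]

lemma pv_two (k : ℕ) : pv n (2 * k) = pvk n k 0 := by
  have e1 : 2 * k / 2 = k := by omega
  have e2 : 2 * k % 2 = 0 := by omega
  simp only [pv, e1, e2]

lemma pv_two1 (k : ℕ) : pv n (2 * k + 1) = pvk n k 1 := by
  have e1 : (2 * k + 1) / 2 = k := by omega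
  have e2 : (2 * k + 1) % 2 = 1 := by omega
  simp only [pv, e1, e2]

lemma pf_even (h0 : 0 < n) {d j : ℕ} (hd : 1 ≤ d) (hj : j < n) (t : ZMod n) :
    pf n t (2 * ((d - 1) * n + j)) =
      (1 - (d : ZMod n) + (j : ZMod n) * al n d + t, (j : ZMod n) * al n d) ∧
    pf n t (2 * ((d - 1) * n + j) + 1) =
      (1 - (d : ZMod n) + (j : ZMod n) * al n d + t, ((j + 1 : ℕ) : ZMod n) * al n d) := by
  constructor
  · simp only [pf, pv_two, pvk_eval h0 hd hj 0, Nat.add_zero]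
  · simp only [pf, pv_two1, pvk_eval h0 hd hj 1]

lemma pf_odd_in (h0 : 0 < n) {d j : ℕ} (hd : 1 ≤ d) (hj1 : j + 1 < n) (t : ZMod n) :
    pf n t (2 * ((d - 1) * n + j) + 1) =
      (1 - (d : ZMod n) + (j : ZMod n) * al n d + t, ((j + 1 : ℕ) : ZMod n) * al n d) ∧
    pf n t (2 * ((d - 1) * n + j) + 2) =
      (1 - (d : ZMod n) + ((j + 1 : ℕ) : ZMod n) * al n d + t,
        ((j + 1 : ℕ) : ZMod n) * al n d) := by
  refine ⟨(pf_even h0 hd (by omega) t).2, ?_⟩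
  have e : 2 * ((d - 1) * n + j) + 2 = 2 * ((d - 1) * n + (j + 1)) := by ring
  rw [e]
  have h2 := (pf_even h0 hd hj1 t).1
  rw [h2]

lemma pf_odd_wrap (h0 : 0 < n) {d : ℕ} (hd : 1 ≤ d) (t : ZMod n) :
    pf n t (2 * ((d - 1) * n + (n - 1)) + 1) = ((d : ZMod n) + t, 0) ∧
    pf n t (2 * ((d - 1) * n + (n - 1)) + 2) = (-(d : ZMod n) + t, 0) := by
  obtain ⟨e, rfl⟩ : ∃ e, d = e + 1 := ⟨d - 1, by omega⟩
  have hn1 : ((n - 1 : ℕ) : ZMod n) = -1 := by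
    rw [Nat.cast_sub (by omega), ZMod.natCast_self]; push_cast; ring
  have hnn : ((n - 1 + 1 : ℕ) : ZMod n) = 0 := by
    have : n - 1 + 1 = n := by omega
    rw [this, ZMod.natCast_self]
  constructor
  · rw [(pf_even h0 (by omega) (by omega) t).2]
    rw [hn1, hnn]
    apply Prod.ext
    · simp only [al]; push_cast; ring
    · simp
  · have e2 : 2 * ((e + 1 - 1) * n + (n - 1)) + 2 = 2 * ((e + 1 + 1 - 1) * n + 0) := by
      have h1 : e + 1 - 1 = e := by omega
      have h2 : e + 1 + 1 - 1 = e + 1 := by omega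
      rw [h1, h2]
      have : e * n + (n - 1) + 1 = (e + 1) * n := by
        have : e * n + n = (e + 1) * n := by ring
        omega
      omega
    rw [e2, (pf_even h0 (by omega) (by omega) t).1]
    apply Prod.ext
    · push_cast; ring
    · push_cast; ring

/-! ### Line invariant and injectivity -/

lemma line0 (k : ℕ) : (pvk n k 0).2 - (pvk n k 0).1 = ((k / n + 1 : ℕ) : ZMod n) - 1 := by
  simp only [pvk, al, Nat.add_zero]
  push_cast
  ring

lemma line1 (k : ℕ) : (pvk n k 1).2 - (pvk n k 1).1 = -((k / n + 1 : ℕ) : ZMod n) := by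
  simp only [pvk, al]
  push_cast
  ring

lemma hLformula (hm : n = 2 * (n / 2) + 1) : n * (n - 1) = 2 * (n / 2 * n) := by
  have h1 : n - 1 = 2 * (n / 2) := by omega
  rw [h1]; ring

lemma pv_inj (hp : n.Prime) (ho : Odd n) {i i' : ℕ} (hi : i ≤ n * (n - 1))
    (hi' : i' ≤ n * (n - 1)) (h : pv n i = pv n i') : i = i' := by
  haveI := Fact.mk hp
  haveI : NeZero n := ⟨hp.ne_zero⟩
  obtain ⟨hm, h3⟩ := nfacts hp ho
  have hL := hLformula hm
  have h0 : 0 < n := by omega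
  obtain ⟨k, r, hr2, rfl⟩ : ∃ k r, r < 2 ∧ i = 2 * k + r :=
    ⟨i / 2, i % 2, by omega, by omega⟩
  obtain ⟨k', r', hr2', rfl⟩ : ∃ k r, r < 2 ∧ i' = 2 * k + r :=
    ⟨i' / 2, i' % 2, by omega, by omega⟩
  obtain ⟨c, j, hj, rfl⟩ : ∃ c j, j < n ∧ k = c * n + j :=
    ⟨k / n, k % n, Nat.mod_lt _ h0, by rw [Nat.mul_comm]; exact (Nat.div_add_mod k n).symm⟩
  obtain ⟨c', j', hj', rfl⟩ : ∃ c j, j < n ∧ k' = c * n + j :=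
    ⟨k' / n, k' % n, Nat.mod_lt _ h0, by rw [Nat.mul_comm]; exact (Nat.div_add_mod k' n).symm⟩
  have hmn : (n / 2 + 1) * n = n / 2 * n + n := by ring
  have hkb : c * n + j ≤ n / 2 * n := by omega
  have hkb' : c' * n + j' ≤ n / 2 * n := by omega
  have hcm : c ≤ n / 2 := by
    by_contra hcc
    have h1 : (n / 2 + 1) * n ≤ c * n := Nat.mul_le_mul_right n (by omega)
    omega
  have hcm' : c' ≤ n / 2 := by
    by_contra hcc
    have h1 : (n / 2 + 1) * n ≤ c' * n := Nat.mul_le_mul_right n (by omega)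
    omega
  have hclt : r = 1 → c < n / 2 := by
    intro hr1
    rcases Nat.lt_or_ge c (n / 2) with hlt | hge
    · exact hlt
    · exfalso
      have hce : c = n / 2 := by omega
      subst hce
      omega
  have hclt' : r' = 1 → c' < n / 2 := by
    intro hr1
    rcases Nat.lt_or_ge c' (n / 2) with hlt | hge
    · exact hlt
    · exfalso
      have hce : c' = n / 2 := by omega
      subst hce
      omega
  have hev : ∀ jj rr cc : ℕ, jj < n → pvk n (cc * n + jj) rr =
      (1 - ((cc + 1 : ℕ) : ZMod n) + (jj : ZMod n) * al n (cc + 1),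
        ((jj + rr : ℕ) : ZMod n) * al n (cc + 1)) := by
    intro jj rr cc hjj
    have h5 := pvk_eval h0 (d := cc + 1) (by omega) hjj rr
    rwa [Nat.add_sub_cancel] at h5
  interval_cases r <;> interval_cases r'
  · simp only [Nat.add_zero] at h
    rw [pv_two, pv_two, hev j 0 c hj, hev j' 0 c' hj'] at h
    have h1 := congrArg Prod.fst h
    have h2 := congrArg Prod.snd h
    simp only at h1 h2
    have hde : ((c + 1 : ℕ) : ZMod n) = ((c' + 1 : ℕ) : ZMod n) := by
      simp only [al] at h1 h2
      push_cast at h1 h2 ⊢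
      linear_combination h2 - h1
    have hcc : c = c' := by
      have := cast_inj_lt (a := c + 1) (b := c' + 1) (by omega) (by omega) hde
      omega
    subst hcc
    rcases Nat.lt_or_ge c (n / 2) with hlt | hge
    · have hal : al n (c + 1) ≠ 0 := al_ne_zero hp ho (by omega) (by omega)
      have hjj : j = j' := by
        apply castj_inj hp hal hj hj'
        simpa [Nat.add_zero] using h2
      omega
    · have hce : c = n / 2 := by omega
      subst hce
      omega
  · exfalso
    simp only [Nat.add_zero] at h
    rw [pv_two, pv_two1, hev j 0 c hj, hev j' 1 c' hj'] at h
    have h1 := congrArg Prod.fst h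
    have h2 := congrArg Prod.snd h
    simp only at h1 h2
    have hclt2 := hclt' rfl
    have hde : ((c + 1 + (c' + 1) : ℕ) : ZMod n) = ((1 : ℕ) : ZMod n) := by
      simp only [al] at h1 h2
      push_cast at h1 h2 ⊢
      linear_combination h2 - h1
    have := mod_small (a := 1) (by omega) (by omega) hde
    omega
  · exfalso
    simp only [Nat.add_zero] at h
    rw [pv_two1, pv_two, hev j 1 c hj, hev j' 0 c' hj'] at h
    have h1 := congrArg Prod.fst h
    have h2 := congrArg Prod.snd h
    simp only at h1 h2
    have hclt2 := hclt rfl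
    have hde : ((c' + 1 + (c + 1) : ℕ) : ZMod n) = ((1 : ℕ) : ZMod n) := by
      simp only [al] at h1 h2
      push_cast at h1 h2 ⊢
      linear_combination h1 - h2
    have := mod_small (a := 1) (by omega) (by omega) hde
    omega
  · rw [pv_two1, pv_two1, hev j 1 c hj, hev j' 1 c' hj'] at h
    have h1 := congrArg Prod.fst h
    have h2 := congrArg Prod.snd h
    simp only at h1 h2
    have hc1 := hclt rfl
    have hc1' := hclt' rfl
    have hde : ((c + 1 : ℕ) : ZMod n) = ((c' + 1 : ℕ) : ZMod n) := by
      simp only [al] at h1 h2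
      push_cast at h1 h2 ⊢
      linear_combination h1 - h2
    have hcc : c = c' := by
      have := cast_inj_lt (a := c + 1) (b := c' + 1) (by omega) (by omega) hde
      omega
    subst hcc
    have hal : al n (c + 1) ≠ 0 := al_ne_zero hp ho (by omega) (by omega)
    have hjj : j + 1 = j' + 1 := by
      have h4 := mul_right_cancel₀ hal h2
      exact cast_inj_le (by omega) (by omega) (by omega) (by omega) h4
    omega

/-! ### Shape lemma -/

lemma shape (hp : n.Prime) (ho : Odd n) {t : ZMod n} {p : ℕ} (hpL : p < n * (n - 1))
    {v w : ZMod n × ZMod n} (h : Match n t p v w) :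
    (∃ d j, 1 ≤ d ∧ d ≤ n / 2 ∧ j < n ∧ v.1 = w.1 ∧
      v.1 = 1 - (d : ZMod n) + (j : ZMod n) * al n d + t ∧
      ((v.2 = (j : ZMod n) * al n d ∧ w.2 = ((j + 1 : ℕ) : ZMod n) * al n d) ∨
       (w.2 = (j : ZMod n) * al n d ∧ v.2 = ((j + 1 : ℕ) : ZMod n) * al n d))) ∨
    (∃ d j, 1 ≤ d ∧ d ≤ n / 2 ∧ j + 1 < n ∧ v.2 = w.2 ∧
      v.2 = ((j + 1 : ℕ) : ZMod n) * al n d ∧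
      ((v.1 = 1 - (d : ZMod n) + (j : ZMod n) * al n d + t ∧
        w.1 = 1 - (d : ZMod n) + ((j + 1 : ℕ) : ZMod n) * al n d + t) ∨
       (w.1 = 1 - (d : ZMod n) + (j : ZMod n) * al n d + t ∧
        v.1 = 1 - (d : ZMod n) + ((j + 1 : ℕ) : ZMod n) * al n d + t))) ∨
    (∃ d, 1 ≤ d ∧ d ≤ n / 2 ∧ v.2 = 0 ∧ w.2 = 0 ∧
      ((v.1 = (d : ZMod n) + t ∧ w.1 = -(d : ZMod n) + t) ∨
       (w.1 = (d : ZMod n) + t ∧ v.1 = -(d : ZMod n) + t))) := by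
  obtain ⟨hm, h3⟩ := nfacts hp ho
  have hL := hLformula hm
  have h0 : 0 < n := by omega
  rcases Nat.even_or_odd p with hev | hod
  · -- row edge
    obtain ⟨k, hk⟩ := hev
    have hk2 : p = 2 * k := by omega
    obtain ⟨c, j, hj, rfl⟩ : ∃ c j, j < n ∧ k = c * n + j :=
      ⟨k / n, k % n, Nat.mod_lt _ h0, by rw [Nat.mul_comm]; exact (Nat.div_add_mod k n).symm⟩
    have hkM : c * n + j < n / 2 * n := by omega
    have hc : c < n / 2 := by
      by_contra hcc
      have h1 : n / 2 * n ≤ c * n := Nat.mul_le_mul_right n (by omega)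
      omega
    have hE := pf_even h0 (d := c + 1) (j := j) (by omega) hj t
    rw [Nat.add_sub_cancel] at hE
    rw [hk2] at h
    left
    refine ⟨c + 1, j, by omega, by omega, hj, ?_, ?_, ?_⟩
    · rcases h with ⟨h1, h2⟩ | ⟨h1, h2⟩ <;> rw [h1, h2, hE.1, hE.2]
    · rcases h with ⟨h1, h2⟩ | ⟨h1, h2⟩
      · rw [h1, hE.1]
      · rw [h2, hE.2]
    · rcases h with ⟨h1, h2⟩ | ⟨h1, h2⟩
      · exact Or.inl ⟨by rw [h1, hE.1], by rw [h2, hE.2]⟩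
      · exact Or.inr ⟨by rw [h1, hE.1], by rw [h2, hE.2]⟩
  · obtain ⟨k, hk⟩ := hod
    have hk2 : p = 2 * k + 1 := by omega
    obtain ⟨c, j, hj, rfl⟩ : ∃ c j, j < n ∧ k = c * n + j :=
      ⟨k / n, k % n, Nat.mod_lt _ h0, by rw [Nat.mul_comm]; exact (Nat.div_add_mod k n).symm⟩
    have hkM : c * n + j < n / 2 * n := by omega
    have hc : c < n / 2 := by
      by_contra hcc
      have h1 : n / 2 * n ≤ c * n := Nat.mul_le_mul_right n (by omega)
      omega
    rw [hk2] at h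
    rcases Nat.lt_or_ge (j + 1) n with hin | hwr
    · -- inner column edge
      have hE := pf_odd_in h0 (d := c + 1) (j := j) (by omega) hin t
      rw [Nat.add_sub_cancel] at hE
      right; left
      refine ⟨c + 1, j, by omega, by omega, hin, ?_, ?_, ?_⟩
      · rcases h with ⟨h1, h2⟩ | ⟨h1, h2⟩ <;> rw [h1, h2, hE.1, hE.2]
      · rcases h with ⟨h1, h2⟩ | ⟨h1, h2⟩
        · rw [h1, hE.1]
        · rw [h2, hE.2]
      · rcases h with ⟨h1, h2⟩ | ⟨h1, h2⟩
        · exact Or.inl ⟨by rw [h1, hE.1], by rw [h2, hE.2]⟩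
        · exact Or.inr ⟨by rw [h1, hE.1], by rw [h2, hE.2]⟩
    · -- wrap column edge
      have hjn : j = n - 1 := by omega
      subst hjn
      have hE := pf_odd_wrap h0 (d := c + 1) (by omega) t
      rw [Nat.add_sub_cancel] at hE
      right; right
      refine ⟨c + 1, by omega, by omega, ?_, ?_, ?_⟩
      · rcases h with ⟨h1, h2⟩ | ⟨h1, h2⟩
        · rw [h1, hE.1]
        · rw [h2, hE.2]
      · rcases h with ⟨h1, h2⟩ | ⟨h1, h2⟩
        · rw [h2, hE.2]
        · rw [h1, hE.1]
      · rcases h with ⟨h1, h2⟩ | ⟨h1, h2⟩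
        · exact Or.inl ⟨by rw [h1, hE.1], by rw [h2, hE.2]⟩
        · exact Or.inr ⟨by rw [h1, hE.1], by rw [h2, hE.2]⟩

/-! ### Uniqueness of the translate containing a given edge -/

lemma alsub {j : ℕ} (d : ℕ) : ((j + 1 : ℕ) : ZMod n) * al n d - (j : ZMod n) * al n d = al n d := by
  push_cast; ring

lemma succ_mul_ne {d j : ℕ} (hne : al n d ≠ 0) :
    (j : ZMod n) * al n d ≠ ((j + 1 : ℕ) : ZMod n) * al n d := by
  intro hh
  apply hne
  push_cast at hh
  linear_combination -hh

lemma succ_mul_ne' {d j : ℕ} (hne : al n d ≠ 0) (x t : ZMod n) :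
    x + (j : ZMod n) * al n d + t ≠ x + ((j + 1 : ℕ) : ZMod n) * al n d + t := by
  intro hh
  apply succ_mul_ne hne (j := j)
  push_cast at hh ⊢
  linear_combination hh

lemma wrap_ne {d : ℕ} (hne : ((2 * d : ℕ) : ZMod n) ≠ 0) (t : ZMod n) :
    (d : ZMod n) + t ≠ -(d : ZMod n) + t := by
  intro hh
  apply hne
  push_cast
  linear_combination hh

lemma t_eq (hp : n.Prime) (ho : Odd n) {v w : ZMod n × ZMod n} {t t' : ZMod n} {p p' : ℕ}
    (hpL : p < n * (n - 1)) (hpL' : p' < n * (n - 1))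
    (h : Match n t p v w) (h' : Match n t' p' v w) : t = t' := by
  haveI := Fact.mk hp
  haveI : NeZero n := ⟨hp.ne_zero⟩
  obtain ⟨hm, h3⟩ := nfacts hp ho
  rcases shape hp ho hpL h with ⟨d, j, hd1, hd2, hj, hvw, hv1, hor⟩ |
      ⟨d, j, hd1, hd2, hj, hvw, hv2, hor⟩ | ⟨d, hd1, hd2, hv2, hw2, hor⟩ <;>
    rcases shape hp ho hpL' h' with ⟨d', j', hd1', hd2', hj', hvw', hv1', hor'⟩ |
      ⟨d', j', hd1', hd2', hj', hvw', hv2', hor'⟩ | ⟨d', hd1', hd2', hv2', hw2', hor'⟩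
  · -- row / row
    have hne : al n d ≠ 0 := al_ne_zero hp ho hd1 hd2
    rcases hor with ⟨e1, e2⟩ | ⟨e1, e2⟩ <;> rcases hor' with ⟨f1, f2⟩ | ⟨f1, f2⟩
    · have g1 : (j : ZMod n) * al n d = (j' : ZMod n) * al n d' := by rw [← e1, f1]
      have g2 : ((j + 1 : ℕ) : ZMod n) * al n d = ((j' + 1 : ℕ) : ZMod n) * al n d' := by
        rw [← e2, f2]
      have hala : al n d = al n d' := by push_cast at g1 g2; linear_combination g2 - g1
      have hdd : d = d' := al_inj hp ho hd1 hd2 hd1' hd2' hala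
      subst hdd
      have hjj : j = j' := castj_inj hp hne hj hj' g1
      subst hjj
      linear_combination hv1' - hv1
    · have g1 : (j : ZMod n) * al n d = ((j' + 1 : ℕ) : ZMod n) * al n d' := by rw [← e1, f2]
      have g2 : ((j + 1 : ℕ) : ZMod n) * al n d = (j' : ZMod n) * al n d' := by rw [← e2, f1]
      have hala : al n d = -al n d' := by push_cast at g1 g2; linear_combination g2 - g1
      exact absurd hala (fun hh => al_ne_neg hp ho hd1 hd2 hd1' hd2' hh)
    · have g1 : (j : ZMod n) * al n d = ((j' + 1 : ℕ) : ZMod n) * al n d' := by rw [← e1, f2]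
      have g2 : ((j + 1 : ℕ) : ZMod n) * al n d = (j' : ZMod n) * al n d' := by rw [← e2, f1]
      have hala : al n d = -al n d' := by push_cast at g1 g2; linear_combination g2 - g1
      exact absurd hala (fun hh => al_ne_neg hp ho hd1 hd2 hd1' hd2' hh)
    · have g1 : (j : ZMod n) * al n d = (j' : ZMod n) * al n d' := by rw [← e1, f1]
      have g2 : ((j + 1 : ℕ) : ZMod n) * al n d = ((j' + 1 : ℕ) : ZMod n) * al n d' := by
        rw [← e2, f2]
      have hala : al n d = al n d' := by push_cast at g1 g2; linear_combination g2 - g1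
      have hdd : d = d' := al_inj hp ho hd1 hd2 hd1' hd2' hala
      subst hdd
      have hjj : j = j' := castj_inj hp hne hj hj' g1
      subst hjj
      linear_combination hv1' - hv1
  · -- row / col-inner : contradiction, v.2 ≠ w.2 from row
    exfalso
    have hne : al n d ≠ 0 := al_ne_zero hp ho hd1 hd2
    have : v.2 ≠ w.2 := by
      rcases hor with ⟨e1, e2⟩ | ⟨e1, e2⟩
      · rw [e1, e2]; exact succ_mul_ne hne
      · rw [e2, e1]; exact (succ_mul_ne hne).symm
    exact this hvw'
  · -- row / wrap : contradiction
    exfalso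
    have hne : al n d ≠ 0 := al_ne_zero hp ho hd1 hd2
    have : v.2 ≠ w.2 := by
      rcases hor with ⟨e1, e2⟩ | ⟨e1, e2⟩
      · rw [e1, e2]; exact succ_mul_ne hne
      · rw [e2, e1]; exact (succ_mul_ne hne).symm
    exact this (hv2'.trans hw2'.symm)
  · -- col-inner / row : contradiction
    exfalso
    have hne : al n d' ≠ 0 := al_ne_zero hp ho hd1' hd2'
    have : v.2 ≠ w.2 := by
      rcases hor' with ⟨e1, e2⟩ | ⟨e1, e2⟩
      · rw [e1, e2]; exact succ_mul_ne hne
      · rw [e2, e1]; exact (succ_mul_ne hne).symm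
    exact this hvw
  · -- col-inner / col-inner
    have hne : al n d ≠ 0 := al_ne_zero hp ho hd1 hd2
    rcases hor with ⟨e1, e2⟩ | ⟨e1, e2⟩ <;> rcases hor' with ⟨f1, f2⟩ | ⟨f1, f2⟩
    · have hala : al n d = al n d' := by
        have g1 := e1.symm.trans f1
        have g2 := e2.symm.trans f2
        push_cast at g1 g2
        linear_combination g2 - g1
      have hdd : d = d' := al_inj hp ho hd1 hd2 hd1' hd2' hala
      subst hdd
      have g3 : ((j + 1 : ℕ) : ZMod n) * al n d = ((j' + 1 : ℕ) : ZMod n) * al n d := by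
        rw [← hv2, hv2']
      have hjj : j + 1 = j' + 1 := by
        have := mul_right_cancel₀ hne g3
        exact cast_inj_le (by omega) (by omega) (by omega) (by omega) this
      have hjj' : j = j' := by omega
      subst hjj'
      linear_combination f1 - e1
    · have hala : al n d = -al n d' := by
        have g1 := e1.symm.trans f2
        have g2 := e2.symm.trans f1
        push_cast at g1 g2
        linear_combination g2 - g1
      exact absurd hala (fun hh => al_ne_neg hp ho hd1 hd2 hd1' hd2' hh)
    · have hala : al n d = -al n d' := by
        have g1 := e1.symm.trans f2
        have g2 := e2.symm.trans f1
        push_cast at g1 g2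
        linear_combination g2 - g1
      exact absurd hala (fun hh => al_ne_neg hp ho hd1 hd2 hd1' hd2' hh)
    · have hala : al n d = al n d' := by
        have g1 := e1.symm.trans f1
        have g2 := e2.symm.trans f2
        push_cast at g1 g2
        linear_combination g2 - g1
      have hdd : d = d' := al_inj hp ho hd1 hd2 hd1' hd2' hala
      subst hdd
      have g3 : ((j + 1 : ℕ) : ZMod n) * al n d = ((j' + 1 : ℕ) : ZMod n) * al n d := by
        rw [← hv2, hv2']
      have hjj : j + 1 = j' + 1 := by
        have := mul_right_cancel₀ hne g3
        exact cast_inj_le (by omega) (by omega) (by omega) (by omega) this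
      have hjj' : j = j' := by omega
      subst hjj'
      linear_combination f1 - e1
  · -- col-inner / wrap : contradiction, v.2 ≠ 0 vs v.2 = 0
    exfalso
    have hne : al n d ≠ 0 := al_ne_zero hp ho hd1 hd2
    have hnz : ((j + 1 : ℕ) : ZMod n) ≠ 0 := by
      intro hh
      have : (j + 1 : ℕ) = 0 := by
        have h0 : ((0 : ℕ) : ZMod n) = 0 := by norm_num
        exact cast_inj_lt (by omega) (by omega) (hh.trans h0.symm)
      omega
    exact (mul_ne_zero hnz hne) (by rw [← hv2, hv2'])
  · -- wrap / row : contradiction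
    exfalso
    have hne : al n d' ≠ 0 := al_ne_zero hp ho hd1' hd2'
    have : v.2 ≠ w.2 := by
      rcases hor' with ⟨e1, e2⟩ | ⟨e1, e2⟩
      · rw [e1, e2]; exact succ_mul_ne hne
      · rw [e2, e1]; exact (succ_mul_ne hne).symm
    exact this (hv2.trans hw2.symm)
  · -- wrap / col-inner : contradiction
    exfalso
    have hne : al n d' ≠ 0 := al_ne_zero hp ho hd1' hd2'
    have hnz : ((j' + 1 : ℕ) : ZMod n) ≠ 0 := by
      intro hh
      have : (j' + 1 : ℕ) = 0 := by
        have h0 : ((0 : ℕ) : ZMod n) = 0 := by norm_num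
        exact cast_inj_lt (by omega) (by omega) (hh.trans h0.symm)
      omega
    exact (mul_ne_zero hnz hne) (by rw [← hv2', hv2])
  · -- wrap / wrap
    rcases hor with ⟨e1, e2⟩ | ⟨e1, e2⟩ <;> rcases hor' with ⟨f1, f2⟩ | ⟨f1, f2⟩
    · have g : ((2 * d : ℕ) : ZMod n) = ((2 * d' : ℕ) : ZMod n) := by
        push_cast
        linear_combination f1 - f2 - e1 + e2
      have hdd : d = d' := two_inj hp ho hd1 hd2 hd1' hd2' g
      subst hdd
      linear_combination f1 - e1
    · exfalso
      have g : ((2 * d : ℕ) : ZMod n) = -((2 * d' : ℕ) : ZMod n) := by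
        push_cast
        linear_combination f2 - f1 - e1 + e2
      exact two_ne_neg hp ho hd1 hd2 hd1' hd2' g
    · exfalso
      have g : ((2 * d : ℕ) : ZMod n) = -((2 * d' : ℕ) : ZMod n) := by
        push_cast
        linear_combination e2 - e1 - f1 + f2
      exact two_ne_neg hp ho hd1 hd2 hd1' hd2' g
    · have g : ((2 * d : ℕ) : ZMod n) = ((2 * d' : ℕ) : ZMod n) := by
        push_cast
        linear_combination e2 - e1 - f2 + f1
      have hdd : d = d' := two_inj hp ho hd1 hd2 hd1' hd2' g
      subst hdd
      linear_combination f1 - e1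

/-! ### Existence -/

lemma pbound (hm : n = 2 * (n / 2) + 1) {d j : ℕ} (hd1 : 1 ≤ d) (hd2 : d ≤ n / 2)
    (hj : j < n) : 2 * ((d - 1) * n + j) + 2 ≤ n * (n - 1) := by
  have hL := hLformula hm
  have h1 : (d - 1) * n + j < (d - 1 + 1) * n := by
    have : (d - 1 + 1) * n = (d - 1) * n + n := by ring
    omega
  have h2 : (d - 1 + 1) * n ≤ n / 2 * n := Nat.mul_le_mul_right n (by omega)
  omega

lemma exists_t (hp : n.Prime) (ho : Odd n) {v w : ZMod n × ZMod n}
    (h : (rook n n).Adj v w) :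
    ∃ t p, p < n * (n - 1) ∧ Match n t p v w := by
  haveI := Fact.mk hp
  haveI : NeZero n := ⟨hp.ne_zero⟩
  obtain ⟨hm, h3⟩ := nfacts hp ho
  have h0 : 0 < n := by omega
  obtain ⟨hne, hor⟩ := h
  by_cases h1 : v.1 = w.1
  · -- row edge
    have h2 : v.2 ≠ w.2 := fun hh => hne (Prod.ext h1 hh)
    have hu : w.2 - v.2 ≠ 0 := sub_ne_zero_of_ne (fun hh => h2 hh.symm)
    obtain ⟨d, hd1, hd2, hcase⟩ := exists_odd_class hp ho hu
    have hal : al n d ≠ 0 := al_ne_zero hp ho hd1 hd2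
    rcases hcase with hc | hc
    · -- w.2 = v.2 + al d : v is lower endpoint
      set jz : ZMod n := v.2 * (al n d)⁻¹ with hjz
      have hjlt : jz.val < n := ZMod.val_lt jz
      have hjc : ((jz.val : ℕ) : ZMod n) = jz := by rw [ZMod.natCast_val, ZMod.cast_id]
      have hja : ((jz.val : ℕ) : ZMod n) * al n d = v.2 := by
        rw [hjc, hjz, mul_assoc, inv_mul_cancel₀ hal, mul_one]
      refine ⟨v.1 - (1 - (d : ZMod n) + ((jz.val : ℕ) : ZMod n) * al n d),
        2 * ((d - 1) * n + jz.val), by have := pbound hm hd1 hd2 hjlt; omega, Or.inl ⟨?_, ?_⟩⟩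
      · rw [(pf_even h0 hd1 hjlt _).1]
        apply Prod.ext
        · simp only; ring
        · simp only [hja]
      · rw [(pf_even h0 hd1 hjlt _).2]
        apply Prod.ext
        · simp only; rw [← h1]; ring
        · simp only; push_cast at hja ⊢; linear_combination hc - hja
    · -- v.2 = w.2 + al d : w is lower endpoint
      set jz : ZMod n := w.2 * (al n d)⁻¹ with hjz
      have hjlt : jz.val < n := ZMod.val_lt jz
      have hjc : ((jz.val : ℕ) : ZMod n) = jz := by rw [ZMod.natCast_val, ZMod.cast_id]
      have hja : ((jz.val : ℕ) : ZMod n) * al n d = w.2 := by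
        rw [hjc, hjz, mul_assoc, inv_mul_cancel₀ hal, mul_one]
      refine ⟨w.1 - (1 - (d : ZMod n) + ((jz.val : ℕ) : ZMod n) * al n d),
        2 * ((d - 1) * n + jz.val), by have := pbound hm hd1 hd2 hjlt; omega, Or.inr ⟨?_, ?_⟩⟩
      · rw [(pf_even h0 hd1 hjlt _).1]
        apply Prod.ext
        · simp only; ring
        · simp only [hja]
      · rw [(pf_even h0 hd1 hjlt _).2]
        apply Prod.ext
        · simp only; rw [h1]; ring
        · simp only; push_cast at hja hc ⊢; linear_combination -hja - hc
  · -- column edge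
    have h2 : v.2 = w.2 := by
      rcases hor with hh | hh
      · exact absurd hh h1
      · exact hh
    by_cases hz : v.2 = 0
    · -- wrap edge
      have hu : v.1 - w.1 ≠ 0 := sub_ne_zero_of_ne h1
      obtain ⟨d, hd1, hd2, hcase⟩ := exists_even_class hp ho hu
      have hb : 2 * ((d - 1) * n + (n - 1)) + 1 < n * (n - 1) := by
        have := pbound hm hd1 hd2 (j := n - 1) (by omega); omega
      rcases hcase with hc | hc
      · refine ⟨v.1 - (d : ZMod n), 2 * ((d - 1) * n + (n - 1)) + 1, hb, Or.inl ⟨?_, ?_⟩⟩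
        · rw [(pf_odd_wrap h0 hd1 _).1]
          apply Prod.ext
          · simp only; ring
          · simp only [hz]
        · rw [(pf_odd_wrap h0 hd1 _).2]
          apply Prod.ext
          · simp only; push_cast at hc ⊢; linear_combination -hc
          · simp only [← h2, hz]
      · refine ⟨w.1 - (d : ZMod n), 2 * ((d - 1) * n + (n - 1)) + 1, hb, Or.inr ⟨?_, ?_⟩⟩
        · rw [(pf_odd_wrap h0 hd1 _).1]
          apply Prod.ext
          · simp only; ring
          · simp only [← h2, hz]
        · rw [(pf_odd_wrap h0 hd1 _).2]
          apply Prod.ext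
          · simp only; push_cast at hc ⊢; linear_combination hc
          · simp only [hz]
    · -- inner column edge
      have hu : w.1 - v.1 ≠ 0 := sub_ne_zero_of_ne (fun hh => h1 hh.symm)
      obtain ⟨d, hd1, hd2, hcase⟩ := exists_odd_class hp ho hu
      have hal : al n d ≠ 0 := al_ne_zero hp ho hd1 hd2
      set jz : ZMod n := v.2 * (al n d)⁻¹ with hjz
      have hjz0 : jz ≠ 0 := mul_ne_zero hz (inv_ne_zero hal)
      have hj1 : 1 ≤ jz.val := by
        have := ZMod.val_pos.2 hjz0
        omega
      have hjlt : jz.val < n := ZMod.val_lt jz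
      have hjc : ((jz.val : ℕ) : ZMod n) = jz := by rw [ZMod.natCast_val, ZMod.cast_id]
      have hja : ((jz.val : ℕ) : ZMod n) * al n d = v.2 := by
        rw [hjc, hjz, mul_assoc, inv_mul_cancel₀ hal, mul_one]
      set j : ℕ := jz.val - 1 with hjdef
      have hj2 : j + 1 = jz.val := by omega
      have hjn : j + 1 < n := by omega
      have hja2 : ((j + 1 : ℕ) : ZMod n) * al n d = v.2 := by rw [hj2]; exact hja
      rcases hcase with hc | hc
      · -- w.1 = v.1 + al d : v lower
        refine ⟨v.1 - (1 - (d : ZMod n) + (j : ZMod n) * al n d),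
          2 * ((d - 1) * n + j) + 1, by have := pbound hm hd1 hd2 (by omega : j < n); omega,
          Or.inl ⟨?_, ?_⟩⟩
        · rw [(pf_odd_in h0 hd1 hjn _).1]
          apply Prod.ext
          · simp only; ring
          · simp only [hja2]
        · rw [(pf_odd_in h0 hd1 hjn _).2]
          apply Prod.ext
          · simp only; push_cast at hc ⊢; linear_combination hc
          · simp only [← h2, hja2]
      · -- v.1 = w.1 + al d : w lower
        refine ⟨w.1 - (1 - (d : ZMod n) + (j : ZMod n) * al n d),
          2 * ((d - 1) * n + j) + 1, by have := pbound hm hd1 hd2 (by omega : j < n); omega,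
          Or.inr ⟨?_, ?_⟩⟩
        · rw [(pf_odd_in h0 hd1 hjn _).1]
          apply Prod.ext
          · simp only; ring
          · simp only [← h2, hja2]
        · rw [(pf_odd_in h0 hd1 hjn _).2]
          apply Prod.ext
          · simp only; push_cast at hc ⊢; linear_combination -hc
          · simp only [hja2]

/-! ### Adjacency of consecutive path vertices -/

lemma match_adj (hp : n.Prime) (ho : Odd n) {t : ZMod n} {p : ℕ} (hpL : p < n * (n - 1))
    {v w : ZMod n × ZMod n} (h : Match n t p v w) : (rook n n).Adj v w := by
  haveI := Fact.mk hp
  obtain ⟨hm, h3⟩ := nfacts hp ho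
  rcases shape hp ho hpL h with ⟨d, j, hd1, hd2, hj, hvw, hv1, hor⟩ |
      ⟨d, j, hd1, hd2, hj, hvw, hv2, hor⟩ | ⟨d, hd1, hd2, hv2, hw2, hor⟩
  · have hne : al n d ≠ 0 := al_ne_zero hp ho hd1 hd2
    have h2 : v.2 ≠ w.2 := by
      rcases hor with ⟨e1, e2⟩ | ⟨e1, e2⟩
      · rw [e1, e2]; exact succ_mul_ne hne
      · rw [e2, e1]; exact (succ_mul_ne hne).symm
    exact ⟨fun hh => h2 (by rw [hh]), Or.inl hvw⟩
  · have hne : al n d ≠ 0 := al_ne_zero hp ho hd1 hd2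
    have h2 : v.1 ≠ w.1 := by
      rcases hor with ⟨e1, e2⟩ | ⟨e1, e2⟩
      · rw [e1, e2]; exact succ_mul_ne' hne _ _
      · rw [e2, e1]; exact (succ_mul_ne' hne _ _).symm
    exact ⟨fun hh => h2 (by rw [hh]), Or.inr hvw⟩
  · have hne : ((2 * d : ℕ) : ZMod n) ≠ 0 := twod_ne_zero hp ho hd1 hd2
    have h2 : v.1 ≠ w.1 := by
      rcases hor with ⟨e1, e2⟩ | ⟨e1, e2⟩
      · rw [e1, e2]; exact wrap_ne hne t
      · rw [e2, e1]; exact (wrap_ne hne t).symm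
    exact ⟨fun hh => h2 (by rw [hh]), Or.inr (hv2.trans hw2.symm)⟩

/-! ### The path subgraphs -/

def BG (n : ℕ) (hp : n.Prime) (ho : Odd n) (t : ZMod n) : (rook n n).Subgraph where
  verts := Set.range (fun i : Fin (n * (n - 1) + 1) => pf n t i)
  Adj v w := ∃ p, p < n * (n - 1) ∧ Match n t p v w
  adj_sub := by
    rintro v w ⟨p, hpL, h⟩
    exact match_adj hp ho hpL h
  edge_vert := by
    rintro v w ⟨p, hpL, h⟩
    rcases h with ⟨h1, h2⟩ | ⟨h1, h2⟩
    · exact ⟨⟨p, by omega⟩, h1.symm⟩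
    · exact ⟨⟨p + 1, by omega⟩, h2.symm⟩
  symm := by
    constructor
    rintro v w ⟨p, hpL, h⟩
    exact ⟨p, hpL, h.symm⟩

lemma pf_inj (hp : n.Prime) (ho : Odd n) {t : ZMod n} {i i' : ℕ} (hi : i ≤ n * (n - 1))
    (hi' : i' ≤ n * (n - 1)) (h : pf n t i = pf n t i') : i = i' := by
  apply pv_inj hp ho hi hi'
  have h1 := congrArg Prod.fst h
  have h2 := congrArg Prod.snd h
  simp only [pf] at h1 h2
  exact Prod.ext (by exact add_right_cancel h1) h2

lemma BG_iso (hp : n.Prime) (ho : Odd n) (t : ZMod n) :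
    Nonempty ((BG n hp ho t).coe ≃g SimpleGraph.pathGraph (n * (n - 1) + 1)) := by
  set L := n * (n - 1) with hLdef
  let g : Fin (L + 1) → (BG n hp ho t).verts := fun i => ⟨pf n t i, ⟨i, rfl⟩⟩
  have hginj : Function.Injective g := by
    intro a b hab
    have : pf n t a = pf n t b := congrArg Subtype.val hab
    exact Fin.ext (pf_inj hp ho (by omega) (by omega) this)
  have hgsurj : Function.Surjective g := by
    rintro ⟨x, ⟨i, hi⟩⟩
    exact ⟨i, Subtype.ext hi⟩
  let e := Equiv.ofBijective g ⟨hginj, hgsurj⟩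
  have hmap : ∀ a b : Fin (L + 1),
      (BG n hp ho t).coe.Adj (e a) (e b) ↔ (pathGraph (L + 1)).Adj a b := by
    intro a b
    rw [pathGraph_adj]
    constructor
    · rintro ⟨p, hpL, hM⟩
      rcases hM with ⟨h1, h2⟩ | ⟨h1, h2⟩
      · have ha : (a : ℕ) = p := pf_inj hp ho (by omega) (by omega) h1
        have hb : (b : ℕ) = p + 1 := pf_inj hp ho (by omega) (by omega) h2
        exact Or.inl (by omega)
      · have ha : (a : ℕ) = p + 1 := pf_inj hp ho (by omega) (by omega) h2
        have hb : (b : ℕ) = p := pf_inj hp ho (by omega) (by omega) h1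
        exact Or.inr (by omega)
    · rintro (hab | hab)
      · refine ⟨(a : ℕ), by omega, Or.inl ⟨rfl, ?_⟩⟩
        show pf n t b = pf n t ((a : ℕ) + 1)
        rw [hab]
      · refine ⟨(b : ℕ), by omega, Or.inr ⟨rfl, ?_⟩⟩
        show pf n t a = pf n t ((b : ℕ) + 1)
        rw [hab]
  have iso2 : SimpleGraph.pathGraph (L + 1) ≃g (BG n hp ho t).coe :=
    ⟨e, by intro a b; exact hmap a b⟩
  exact ⟨iso2.symm⟩

end GR

open SimpleGraph in
/-- For every odd prime `n`, the edge set of `K_n □ K_n` (a connected graph on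
`n²` vertices) can be partitioned into `n = √(n²)` paths, confirming Gallai's
conjecture for these graphs. -/
theorem gallai_for_rook (n : ℕ) (hn : n.Prime) (ho : Odd n) :
    ∃ D : Finset ((rook n n).Subgraph),
      D.card = n ∧
      (∀ B ∈ D, ∃ ℓ : ℕ, Nonempty (B.coe ≃g pathGraph (ℓ + 1))) ∧
      (∀ e ∈ (rook n n).edgeSet, ∃! B, B ∈ D ∧ e ∈ B.edgeSet) := by
  classical
  haveI := Fact.mk hn
  haveI : NeZero n := ⟨hn.ne_zero⟩
  obtain ⟨hm, h3⟩ := GR.nfacts hn ho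
  have hL0 : 0 < n * (n - 1) := Nat.mul_pos (by omega) (by omega)
  have hBGinj : Function.Injective (fun t => GR.BG n hn ho t) := by
    intro t t' h
    have hM : GR.Match n t 0 (GR.pf n t 0) (GR.pf n t 1) := Or.inl ⟨rfl, rfl⟩
    have hA : (GR.BG n hn ho t).Adj (GR.pf n t 0) (GR.pf n t 1) := ⟨0, hL0, hM⟩
    have h2 : GR.BG n hn ho t = GR.BG n hn ho t' := h
    rw [h2] at hA
    obtain ⟨p', hp', hM'⟩ := hA
    exact GR.t_eq hn ho hL0 hp' hM hM'
  refine ⟨Finset.image (fun t => GR.BG n hn ho t) Finset.univ, ?_, ?_, ?_⟩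
  · rw [Finset.card_image_of_injective _ hBGinj, Finset.card_univ, ZMod.card]
  · intro B hB
    obtain ⟨t, -, rfl⟩ := Finset.mem_image.1 hB
    exact ⟨n * (n - 1), GR.BG_iso hn ho t⟩
  · intro e he
    induction e with
    | _ v w =>
      rw [SimpleGraph.mem_edgeSet] at he
      obtain ⟨t, p, hpL, hM⟩ := GR.exists_t hn ho he
      refine ⟨GR.BG n hn ho t,
        ⟨Finset.mem_image.2 ⟨t, Finset.mem_univ t, rfl⟩,
          SimpleGraph.Subgraph.mem_edgeSet.2 ⟨p, hpL, hM⟩⟩, ?_⟩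
      rintro B' ⟨hB', he'⟩
      obtain ⟨t', -, rfl⟩ := Finset.mem_image.1 hB'
      obtain ⟨p', hp', hM'⟩ := SimpleGraph.Subgraph.mem_edgeSet.1 he'
      have : t' = t := GR.t_eq hn ho hp' hpL hM' hM
      rw [this]
end

section
/- For every odd prime n, the 2(n-1)-regular graph K_n □ K_n can be decomposed into n² paths each having exactly n-1 edges. -/
namespace RookAux

/-- Triangular numbers. -/
def T : ℕ → ℕ
  | 0 => 0
  | k+1 => T k + (k+1)

lemma two_mul_T : ∀ k, 2 * T k = k * (k+1)
  | 0 => rfl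
  | k+1 => by rw [T, Nat.mul_add, two_mul_T k]; ring

lemma cast_lt_inj {n a b : ℕ} (ha : a < n) (hb : b < n) (h : (a : ZMod n) = b) : a = b := by
  have := (ZMod.natCast_eq_natCast_iff a b n).mp h
  rwa [Nat.ModEq, Nat.mod_eq_of_lt ha, Nat.mod_eq_of_lt hb] at this

lemma cast_ne_zero {n k : ℕ} (h1 : 1 ≤ k) (h2 : k < n) : (k : ZMod n) ≠ 0 := by
  intro h
  have : k = 0 := cast_lt_inj h2 (by omega) (by exact_mod_cast h)
  omega

lemma cast_add_ne_zero {n a b : ℕ} (h1 : 1 ≤ a + b) (h2 : a + b < n) :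
    (a : ZMod n) + (b : ZMod n) ≠ 0 := by
  intro h
  have : ((a + b : ℕ) : ZMod n) = 0 := by rw [Nat.cast_add]; exact h
  exact cast_ne_zero h1 h2 this

/-- Triangular numbers `T 0, …, T m` are pairwise distinct mod `n = 2m+1` prime. -/
lemma T_inj {n m a b : ℕ} (hp : n.Prime) (hm : n = 2*m+1) (ha : a ≤ m) (hb : b ≤ m)
    (h : (T a : ZMod n) = (T b : ZMod n)) : a = b := by
  have h2 : ((2 * T a : ℕ) : ZMod n) = ((2 * T b : ℕ) : ZMod n) := by rw [Nat.cast_mul, Nat.cast_mul, h]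
  have hmod := (ZMod.natCast_eq_natCast_iff _ _ _).mp h2
  have hdvd : (n : ℤ) ∣ ((2 * T b : ℕ) : ℤ) - ((2 * T a : ℕ) : ℤ) := hmod.dvd
  have hfac : ((2 * T b : ℕ) : ℤ) - ((2 * T a : ℕ) : ℤ)
      = ((b : ℤ) - a) * ((a : ℤ) + b + 1) := by
    rw [two_mul_T, two_mul_T]; push_cast; ring
  rw [hfac] at hdvd
  have hprime : Prime (n : ℤ) := Nat.prime_iff_prime_int.mp hp
  rcases hprime.dvd_mul.mp hdvd with hc | hc
  · by_contra hne
    have hne' : (b : ℤ) - a ≠ 0 := by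
      intro h0; apply hne; omega
    have hle := Int.le_of_dvd (abs_pos.mpr hne') ((dvd_abs _ _).mpr hc)
    have h1 : |(b : ℤ) - a| ≤ m := by rw [abs_le]; omega
    have : (m : ℤ) < n := by omega
    omega
  · have hdn : n ∣ (a + b + 1) := by exact_mod_cast hc
    have := Nat.le_of_dvd (by omega) hdn
    omega

/-- The zigzag path vertices through triangular-number coordinates. -/
def gp (n i : ℕ) : ZMod n × ZMod n := (((T ((i+1)/2) : ℕ) : ZMod n), ((T (i/2) : ℕ) : ZMod n))

lemma gp_even (n k : ℕ) : gp n (2*k) = (((T k : ℕ) : ZMod n), ((T k : ℕ) : ZMod n)) := by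
  unfold gp
  rw [show (2*k+1)/2 = k by omega, show (2*k)/2 = k by omega]

lemma gp_odd (n k : ℕ) : gp n (2*k+1) = (((T (k+1) : ℕ) : ZMod n), ((T k : ℕ) : ZMod n)) := by
  unfold gp
  rw [show (2*k+1+1)/2 = k+1 by omega, show (2*k+1)/2 = k by omega]

lemma gp_step_even (n k : ℕ) :
    gp n (2*k+1) = gp n (2*k) + ((((k+1 : ℕ)) : ZMod n), 0) := by
  rw [gp_even, gp_odd, Prod.mk_add_mk, Prod.mk.injEq]
  constructor
  · show ((T (k+1) : ℕ) : ZMod n) = _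
    rw [show T (k+1) = T k + (k+1) from rfl]; push_cast; ring
  · rw [add_zero]

lemma gp_step_odd (n k : ℕ) :
    gp n (2*k+2) = gp n (2*k+1) + (0, (((k+1 : ℕ)) : ZMod n)) := by
  rw [show 2*k+2 = 2*(k+1) by ring, gp_even, gp_odd, Prod.mk_add_mk, Prod.mk.injEq]
  constructor
  · rw [add_zero]
  · show ((T (k+1) : ℕ) : ZMod n) = _
    rw [show T (k+1) = T k + (k+1) from rfl]; push_cast; ring

/-- The path vertices are pairwise distinct. -/
lemma gp_inj {n m i j : ℕ} (hp : n.Prime) (hm : n = 2*m+1) (hi : i < n) (hj : j < n)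
    (h : gp n i = gp n j) : i = j := by
  rw [gp, gp, Prod.mk.injEq] at h
  have e1 : (i+1)/2 = (j+1)/2 := T_inj hp hm (by omega) (by omega) h.1
  have e2 : i/2 = j/2 := T_inj hp hm (by omega) (by omega) h.2
  omega

/-- One step of the path: a well-understood difference vector (weak form). -/
lemma step_cases' (n : ℕ) {i : ℕ} (hi : i + 1 < n) :
    ∃ c, 1 ≤ c ∧ c < n ∧
      ((gp n (i+1) - gp n i = (((c : ℕ) : ZMod n), 0) ∧ i = 2*(c-1)) ∨
       (gp n (i+1) - gp n i = (0, ((c : ℕ) : ZMod n)) ∧ i = 2*(c-1)+1)) := by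
  rcases Nat.even_or_odd i with ⟨k, hk⟩ | ⟨k, hk⟩
  · refine ⟨k+1, by omega, by omega, Or.inl ⟨?_, by omega⟩⟩
    rw [show i + 1 = 2*k+1 by omega, show i = 2*k by omega, gp_step_even, add_sub_cancel_left]
  · refine ⟨k+1, by omega, by omega, Or.inr ⟨?_, by omega⟩⟩
    rw [show i + 1 = 2*k+2 by omega, show i = 2*k+1 by omega, gp_step_odd, add_sub_cancel_left]

/-- One step of the path: a well-understood difference vector (strong form). -/
lemma step_cases {n m : ℕ} (hm : n = 2*m+1) {i : ℕ} (hi : i + 1 < n) :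
    ∃ c, 1 ≤ c ∧ c ≤ m ∧
      ((gp n (i+1) - gp n i = (((c : ℕ) : ZMod n), 0) ∧ i = 2*(c-1)) ∨
       (gp n (i+1) - gp n i = (0, ((c : ℕ) : ZMod n)) ∧ i = 2*(c-1)+1)) := by
  obtain ⟨c, hc1, hc2, hc⟩ := step_cases' n hi
  rcases hc with ⟨hd, hp⟩ | ⟨hd, hp⟩
  · exact ⟨c, hc1, by omega, Or.inl ⟨hd, hp⟩⟩
  · exact ⟨c, hc1, by omega, Or.inr ⟨hd, hp⟩⟩

lemma rook_adj_of_step_h {n : ℕ} {v w : ZMod n × ZMod n} (c : ℕ) (h1 : 1 ≤ c) (h2 : c < n)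
    (h : w = v + (((c : ℕ) : ZMod n), 0)) : (rook n n).Adj v w := by
  subst h
  refine ⟨?_, Or.inr (by simp)⟩
  intro hc
  have := congrArg Prod.fst hc
  simp only [Prod.fst_add] at this
  exact cast_ne_zero h1 h2 (by linear_combination -this)

lemma rook_adj_of_step_v {n : ℕ} {v w : ZMod n × ZMod n} (c : ℕ) (h1 : 1 ≤ c) (h2 : c < n)
    (h : w = v + (0, ((c : ℕ) : ZMod n))) : (rook n n).Adj v w := by
  subst h
  refine ⟨?_, Or.inl (by simp)⟩
  intro hc
  have := congrArg Prod.snd hc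
  simp only [Prod.snd_add] at this
  exact cast_ne_zero h1 h2 (by linear_combination -this)

lemma rook_adj_gp {n : ℕ} (u : ZMod n × ZMod n) {i : ℕ} (hi : i + 1 < n) :
    (rook n n).Adj (gp n i + u) (gp n (i+1) + u) := by
  obtain ⟨c, hc1, hc2, ⟨hstep, -⟩ | ⟨hstep, -⟩⟩ := step_cases' n hi
  · exact rook_adj_of_step_h c hc1 hc2 (by rw [← hstep]; ring)
  · exact rook_adj_of_step_v c hc1 hc2 (by rw [← hstep]; ring)

/-- The translate by `u` of the zigzag path, as a subgraph of the rook graph. -/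
def pBlock (n : ℕ) (u : ZMod n × ZMod n) : (rook n n).Subgraph where
  verts := {v | ∃ i, i < n ∧ v = gp n i + u}
  Adj v w := ∃ i, i + 1 < n ∧
    ((v = gp n i + u ∧ w = gp n (i+1) + u) ∨ (w = gp n i + u ∧ v = gp n (i+1) + u))
  adj_sub := by
    rintro v w ⟨i, hi, ⟨hv, hw⟩ | ⟨hw, hv⟩⟩
    · subst hv; subst hw; exact rook_adj_gp u hi
    · subst hv; subst hw; exact (rook n n).adj_symm (rook_adj_gp u hi)
  edge_vert := by
    rintro v w ⟨i, hi, ⟨hv, -⟩ | ⟨-, hv⟩⟩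
    · exact ⟨i, by omega, hv⟩
    · exact ⟨i+1, hi, hv⟩
  symm := by
    constructor
    rintro v w ⟨i, hi, h⟩
    exact ⟨i, hi, h.symm⟩

/-- Distinct step vectors are never equal. -/
lemma step_eq_step {n m : ℕ} (_hp : n.Prime) (hm : n = 2*m+1) {i j : ℕ}
    (hi : i + 1 < n) (hj : j + 1 < n)
    (h : gp n (i+1) - gp n i = gp n (j+1) - gp n j) : i = j := by
  obtain ⟨c, hc1, hc2, hc⟩ := step_cases hm hi
  obtain ⟨d, hd1, hd2, hd⟩ := step_cases hm hj
  rcases hc with ⟨hcd, hcp⟩ | ⟨hcd, hcp⟩ <;> rcases hd with ⟨hdd, hdp⟩ | ⟨hdd, hdp⟩ <;>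
    rw [hcd, hdd, Prod.mk.injEq] at h
  · have : c = d := cast_lt_inj (by omega) (by omega) h.1
    omega
  · exact absurd h.1 (cast_ne_zero hc1 (by omega))
  · exact absurd h.2 (cast_ne_zero hc1 (by omega))
  · have : c = d := cast_lt_inj (by omega) (by omega) h.2
    omega

/-- A step vector is never the negation of a step vector. -/
lemma step_ne_neg_step {n m : ℕ} (_hp : n.Prime) (hm : n = 2*m+1) {i j : ℕ}
    (hi : i + 1 < n) (hj : j + 1 < n) :
    gp n (i+1) - gp n i ≠ -(gp n (j+1) - gp n j) := by
  intro h
  obtain ⟨c, hc1, hc2, hc⟩ := step_cases hm hi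
  obtain ⟨d, hd1, hd2, hd⟩ := step_cases hm hj
  rcases hc with ⟨hcd, -⟩ | ⟨hcd, -⟩ <;> rcases hd with ⟨hdd, -⟩ | ⟨hdd, -⟩ <;>
    rw [hcd, hdd, Prod.neg_mk, Prod.mk.injEq] at h
  · exact cast_add_ne_zero (n := n) (a := c) (b := d) (by omega) (by omega)
      (eq_neg_iff_add_eq_zero.mp h.1)
  · exact cast_ne_zero (n := n) (k := c) hc1 (by omega) (by simpa using h.1)
  · exact cast_ne_zero (n := n) (k := c) hc1 (by omega) (by simpa using h.2)
  · exact cast_add_ne_zero (n := n) (a := c) (b := d) (by omega) (by omega)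
      (eq_neg_iff_add_eq_zero.mp h.2)

/-- An edge lies in at most one block. -/
lemma adj_unique {n m : ℕ} (hp : n.Prime) (hm : n = 2*m+1) {u u' v w : ZMod n × ZMod n}
    (h1 : (pBlock n u).Adj v w) (h2 : (pBlock n u').Adj v w) : u = u' := by
  obtain ⟨i, hi, hc1⟩ := h1
  obtain ⟨j, hj, hc2⟩ := h2
  have straight : ∀ (a b : ZMod n × ZMod n), a = gp n i + u → b = gp n (i+1) + u →
      a = gp n j + u' → b = gp n (j+1) + u' → u = u' := by
    intro a b ha hb ha' hb'
    have hstep : gp n (i+1) - gp n i = gp n (j+1) - gp n j := by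
      have : gp n (i+1) + u - (gp n i + u) = gp n (j+1) + u' - (gp n j + u') := by
        rw [← hb, ← ha, ← hb', ← ha']
      calc gp n (i+1) - gp n i = gp n (i+1) + u - (gp n i + u) := by ring
        _ = gp n (j+1) + u' - (gp n j + u') := this
        _ = gp n (j+1) - gp n j := by ring
    have hij : i = j := step_eq_step hp hm hi hj hstep
    subst hij
    have : gp n i + u = gp n i + u' := by rw [← ha, ha']
    exact add_left_cancel this
  have crossed : ∀ (a b : ZMod n × ZMod n), a = gp n i + u → b = gp n (i+1) + u →
      b = gp n j + u' → a = gp n (j+1) + u' → False := by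
    intro a b ha hb hb' ha'
    apply step_ne_neg_step hp hm hi hj
    have : gp n (i+1) + u - (gp n i + u) = -((gp n (j+1) + u') - (gp n j + u')) := by
      rw [← hb, ← ha, ← ha', ← hb']; ring
    calc gp n (i+1) - gp n i = gp n (i+1) + u - (gp n i + u) := by ring
      _ = -((gp n (j+1) + u') - (gp n j + u')) := this
      _ = -(gp n (j+1) - gp n j) := by ring
  rcases hc1 with ⟨hv, hw⟩ | ⟨hw, hv⟩ <;> rcases hc2 with ⟨hv', hw'⟩ | ⟨hw', hv'⟩
  · exact straight v w hv hw hv' hw'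
  · exact absurd (crossed v w hv hw hw' hv') not_false
  · exact absurd (crossed w v hw hv hv' hw') not_false
  · exact straight w v hw hv hw' hv'

/-- Every nonzero residue is `±c` for a unique `1 ≤ c ≤ m`; here existence. -/
lemma exists_class {n m : ℕ} (hm : n = 2*m+1) {d : ZMod n} (hd : d ≠ 0) :
    ∃ c, 1 ≤ c ∧ c ≤ m ∧ (d = ((c : ℕ) : ZMod n) ∨ d = -((c : ℕ) : ZMod n)) := by
  haveI : NeZero n := ⟨by omega⟩
  have hv : d.val < n := ZMod.val_lt d
  have hv0 : d.val ≠ 0 := fun h => hd ((ZMod.val_eq_zero d).mp h)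
  have hcast : ((d.val : ℕ) : ZMod n) = d := ZMod.natCast_rightInverse d
  rcases le_or_gt d.val m with h | h
  · exact ⟨d.val, by omega, h, Or.inl hcast.symm⟩
  · refine ⟨n - d.val, by omega, by omega, Or.inr ?_⟩
    have : ((n - d.val : ℕ) : ZMod n) = -d := by
      rw [Nat.cast_sub (by omega), ZMod.natCast_self, hcast]; ring
    rw [this, neg_neg]

/-- Every rook edge lies in some block. -/
lemma exists_block {n m : ℕ} (_hp : n.Prime) (hm : n = 2*m+1) {v w : ZMod n × ZMod n}
    (hadj : (rook n n).Adj v w) : ∃ u, (pBlock n u).Adj v w := by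
  obtain ⟨hne, hor⟩ := hadj
  rcases hor with hfst | hsnd
  · -- vertical edge: first coordinates agree
    have hd : v.2 - w.2 ≠ 0 := by
      rw [sub_ne_zero]
      intro h
      exact hne (Prod.ext hfst h)
    obtain ⟨c, hc1, hc2, hc⟩ := exists_class hm hd
    obtain ⟨k, rfl⟩ : ∃ k, c = k + 1 := ⟨c - 1, by omega⟩
    have hlt : 2*k+2 < n := by omega
    rcases hc with hc | hc
    · -- v.2 = w.2 + (k+1)
      refine ⟨w - gp n (2*k+1), 2*k+1, hlt, Or.inr ⟨by ring, ?_⟩⟩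
      rw [show 2*k+1+1 = 2*k+2 from rfl, gp_step_odd]
      have : gp n (2*k+1) + (0, ((k+1 : ℕ) : ZMod n)) + (w - gp n (2*k+1))
          = w + (0, ((k+1 : ℕ) : ZMod n)) := by ring
      rw [this]
      apply Prod.ext
      · simp [hfst]
      · simp only [Prod.snd_add]
        rw [← hc]; ring
    · -- w.2 = v.2 + (k+1)
      refine ⟨v - gp n (2*k+1), 2*k+1, hlt, Or.inl ⟨by ring, ?_⟩⟩
      rw [show 2*k+1+1 = 2*k+2 from rfl, gp_step_odd]
      have : gp n (2*k+1) + (0, ((k+1 : ℕ) : ZMod n)) + (v - gp n (2*k+1))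
          = v + (0, ((k+1 : ℕ) : ZMod n)) := by ring
      rw [this]
      apply Prod.ext
      · simp [hfst]
      · simp only [Prod.snd_add]
        rw [eq_neg_iff_add_eq_zero] at hc
        linear_combination -hc
  · -- horizontal edge: second coordinates agree
    have hd : v.1 - w.1 ≠ 0 := by
      rw [sub_ne_zero]
      intro h
      exact hne (Prod.ext h hsnd)
    obtain ⟨c, hc1, hc2, hc⟩ := exists_class hm hd
    obtain ⟨k, rfl⟩ : ∃ k, c = k + 1 := ⟨c - 1, by omega⟩
    have hlt : 2*k+1 < n := by omega
    rcases hc with hc | hc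
    · refine ⟨w - gp n (2*k), 2*k, hlt, Or.inr ⟨by ring, ?_⟩⟩
      rw [show 2*k+1 = 2*k+1 from rfl, gp_step_even]
      have : gp n (2*k) + (((k+1 : ℕ) : ZMod n), 0) + (w - gp n (2*k))
          = w + (((k+1 : ℕ) : ZMod n), 0) := by ring
      rw [this]
      apply Prod.ext
      · simp only [Prod.fst_add]
        rw [← hc]; ring
      · simp [hsnd]
    · refine ⟨v - gp n (2*k), 2*k, hlt, Or.inl ⟨by ring, ?_⟩⟩
      rw [gp_step_even]
      have : gp n (2*k) + (((k+1 : ℕ) : ZMod n), 0) + (v - gp n (2*k))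
          = v + (((k+1 : ℕ) : ZMod n), 0) := by ring
      rw [this]
      apply Prod.ext
      · simp only [Prod.fst_add]
        rw [eq_neg_iff_add_eq_zero] at hc
        linear_combination -hc
      · simp [hsnd]

/-- Each block is isomorphic to the path graph on `n` vertices. -/
lemma block_iso {n m : ℕ} (hp : n.Prime) (hm : n = 2*m+1) (u : ZMod n × ZMod n) :
    Nonempty ((pBlock n u).coe ≃g SimpleGraph.pathGraph n) := by
  have hfun : ∀ i : Fin n, gp n i.val + u ∈ (pBlock n u).verts := fun i => ⟨i.val, i.2, rfl⟩
  let f : Fin n → (pBlock n u).verts := fun i => ⟨gp n i.val + u, hfun i⟩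
  have hbij : Function.Bijective f := by
    constructor
    · intro a b hab
      have : gp n a.val + u = gp n b.val + u := congrArg Subtype.val hab
      exact Fin.ext (gp_inj hp hm a.2 b.2 (add_right_cancel this))
    · rintro ⟨x, i, hi, hx⟩
      exact ⟨⟨i, hi⟩, Subtype.ext hx.symm⟩
  let e := Equiv.ofBijective f hbij
  have hrel : ∀ a b : Fin n, (pBlock n u).coe.Adj (e a) (e b) ↔
      (SimpleGraph.pathGraph n).Adj a b := by
    intro a b
    rw [SimpleGraph.Subgraph.coe_adj, SimpleGraph.pathGraph_adj]
    show (pBlock n u).Adj (gp n a.val + u) (gp n b.val + u) ↔ _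
    constructor
    · rintro ⟨i, hi, ⟨hv, hw⟩ | ⟨hw, hv⟩⟩
      · have ha : a.val = i := gp_inj hp hm a.2 (by omega) (add_right_cancel hv)
        have hb : b.val = i + 1 := gp_inj hp hm b.2 hi (add_right_cancel hw)
        omega
      · have ha : a.val = i + 1 := gp_inj hp hm a.2 hi (add_right_cancel hv)
        have hb : b.val = i := gp_inj hp hm b.2 (by omega) (add_right_cancel hw)
        omega
    · rintro (hab | hba)
      · refine ⟨a.val, by omega, Or.inl ⟨rfl, ?_⟩⟩
        rw [show a.val + 1 = b.val from hab]
      · refine ⟨b.val, by omega, Or.inr ⟨rfl, ?_⟩⟩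
        rw [show b.val + 1 = a.val from hba]
  exact ⟨(SimpleGraph.Iso.symm ⟨e, fun {a b} => hrel a b⟩ : _)⟩

lemma pBlock_injective {n m : ℕ} (hp : n.Prime) (hm : n = 2*m+1) :
    Function.Injective (pBlock n) := by
  intro u u' h
  have hn2 := hp.two_le
  have h1 : (pBlock n u).Adj (gp n 0 + u) (gp n 1 + u) :=
    ⟨0, by omega, Or.inl ⟨rfl, rfl⟩⟩
  have h2 : (pBlock n u').Adj (gp n 0 + u) (gp n 1 + u) := h ▸ h1
  exact adj_unique hp hm h1 h2

end RookAux

open SimpleGraph in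
/-- For every odd prime `n`, the `2(n-1)`-regular graph `K_n □ K_n` can be
decomposed into `n²` paths, each having exactly `n - 1` edges (i.e. `n` vertices). -/
theorem ringel_haggkvist_for_rook (n : ℕ) (hn : n.Prime) (ho : Odd n) :
    ∃ D : Finset ((rook n n).Subgraph),
      D.card = n ^ 2 ∧
      (∀ B ∈ D, Nonempty (B.coe ≃g pathGraph n)) ∧
      (∀ e ∈ (rook n n).edgeSet, ∃! B, B ∈ D ∧ e ∈ B.edgeSet) := by
  obtain ⟨m, hm⟩ : ∃ m, n = 2*m+1 := by
    obtain ⟨k, hk⟩ := ho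
    exact ⟨k, by omega⟩
  haveI : NeZero n := ⟨by omega⟩
  haveI : DecidableEq ((rook n n).Subgraph) := Classical.decEq _
  refine ⟨Finset.image (RookAux.pBlock n) Finset.univ, ?_, ?_, ?_⟩
  · rw [Finset.card_image_of_injective _ (RookAux.pBlock_injective hn hm), Finset.card_univ,
      Fintype.card_prod, ZMod.card, sq]
  · rintro B hB
    obtain ⟨u, -, rfl⟩ := Finset.mem_image.mp hB
    exact RookAux.block_iso hn hm u
  · intro e he
    induction e using Sym2.ind with
    | _ v w =>
      rw [SimpleGraph.mem_edgeSet] at he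
      obtain ⟨u, hu⟩ := RookAux.exists_block hn hm he
      refine ⟨RookAux.pBlock n u,
        ⟨Finset.mem_image_of_mem _ (Finset.mem_univ u),
          (SimpleGraph.Subgraph.mem_edgeSet).mpr hu⟩, ?_⟩
      rintro B ⟨hB, hBe⟩
      obtain ⟨u', -, rfl⟩ := Finset.mem_image.mp hB
      rw [SimpleGraph.Subgraph.mem_edgeSet] at hBe
      rw [RookAux.adj_unique hn hm hBe hu]
end

section
/- Let n be an odd prime, n ≥ 5, let 1 ≤ k < k' ≤ (n-1)/2 with k' = k + 1 + m, m ≥ 0. For any 1 ≤ p ≤ 2n and 1 ≤ q ≤ 2n-1, the element of Z_n × Z_n given by (sum of entries p..2n of stretch S_k) + m·(1,0) + (sum of entries 1..q of stretch S_{k'}) is nonzero. -/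
open Finset in
lemma sum_stretch_prefix (n k : ℕ) (q : ℕ) (hq : q < 2 * n) :
    ∑ g ∈ Icc 1 q, stretchEntry n k g
      = (((q / 2 * (2 * k - 1) : ℕ) : ZMod n), (((q + 1) / 2 * (2 * k - 1) : ℕ) : ZMod n)) := by
  induction q with
  | zero => simp; rfl
  | succ q ih =>
    rw [Finset.sum_Icc_succ_top (by omega), ih (by omega)]
    have h2n : ¬ (q + 1 = 2 * n) := by omega
    rcases Nat.even_or_odd q with ⟨t, rfl⟩ | ⟨t, rfl⟩
    · have hm : (t + t + 1) % 2 = 1 := by omega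
      simp only [stretchEntry, if_neg h2n, hm, if_pos rfl]
      have e1 : (t + t) / 2 = t := by omega
      have e2 : (t + t + 1) / 2 = t := by omega
      have e3 : (t + t + 1 + 1) / 2 = t + 1 := by omega
      rw [Prod.mk_add_mk, Prod.mk.injEq, e1, e2, e3]
      constructor
      · push_cast; ring
      · push_cast; ring
    · have hm : ¬ ((2 * t + 1 + 1) % 2 = 1) := by omega
      simp only [stretchEntry, if_neg h2n, if_neg hm]
      have e1 : (2 * t + 1) / 2 = t := by omega
      have e2 : (2 * t + 1 + 1) / 2 = t + 1 := by omega
      have e3 : (2 * t + 1 + 1 + 1) / 2 = t + 1 := by omega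
      rw [Prod.mk_add_mk, Prod.mk.injEq, e1, e2, e3]
      constructor
      · push_cast; ring
      · push_cast; ring

open Finset in
lemma sum_stretch_full (n k : ℕ) (hn : 1 ≤ n) (hk : 1 ≤ k) :
    ∑ g ∈ Icc 1 (2 * n), stretchEntry n k g = ((1 : ZMod n), (0 : ZMod n)) := by
  have h : 2 * n = (2 * n - 1) + 1 := by omega
  have hent : stretchEntry n k (2 * n) = (((2 * k : ℕ) : ZMod n), 0) := by
    simp [stretchEntry]
  rw [h, Finset.sum_Icc_succ_top (by omega), sum_stretch_prefix n k (2 * n - 1) (by omega), ← h,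
    hent, Prod.mk_add_mk, Prod.mk.injEq]
  have e1 : (2 * n - 1) / 2 = n - 1 := by omega
  have e2 : 2 * n / 2 = n := by omega
  rw [e1, e2]
  constructor
  · have key : (n - 1) * (2 * k - 1) + 2 * k = n * (2 * k - 1) + 1 := by
      obtain ⟨n', rfl⟩ : ∃ n', n = n' + 1 := ⟨n - 1, by omega⟩
      obtain ⟨k', rfl⟩ : ∃ k', k = k' + 1 := ⟨k - 1, by omega⟩
      have h1 : 2 * (k' + 1) - 1 = 2 * k' + 1 := by omega
      have h2 : n' + 1 - 1 = n' := by omega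
      rw [h1, h2]; ring
    calc (((n - 1) * (2 * k - 1) : ℕ) : ZMod n) + ((2 * k : ℕ) : ZMod n)
        = (((n - 1) * (2 * k - 1) + 2 * k : ℕ) : ZMod n) := by push_cast; ring
      _ = ((n * (2 * k - 1) + 1 : ℕ) : ZMod n) := by rw [key]
      _ = 1 := by push_cast; simp
  · push_cast; simp

open Finset in
/-- Key inequality across two distinct stretches: for `n` an odd prime with `n ≥ 5`,
`1 ≤ k` and `k' = k + 1 + m ≤ (n-1)/2`, `1 ≤ p ≤ 2n` and `1 ≤ q ≤ 2n - 1`, the sum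
`(Σ_{g=p}^{2n} a_{k,g}) + m·(1,0) + (Σ_{g=1}^{q} a_{k',g})` is nonzero
in `ZMod n × ZMod n`. -/
theorem cross_stretch_sum_ne_zero (n k m p q : ℕ) (hn : n.Prime) (ho : Odd n)
    (h5 : 5 ≤ n) (hk : 1 ≤ k) (hk' : k + 1 + m ≤ (n - 1) / 2)
    (hp1 : 1 ≤ p) (hp2 : p ≤ 2 * n) (hq1 : 1 ≤ q) (hq2 : q ≤ 2 * n - 1) :
    (∑ g ∈ Icc p (2 * n), stretchEntry n k g) + ((m : ZMod n), (0 : ZMod n)) +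
        ∑ g ∈ Icc 1 q, stretchEntry n (k + 1 + m) g ≠ 0 := by
  obtain ⟨w, hw⟩ := ho
  haveI : NeZero n := ⟨by omega⟩
  obtain ⟨K, rfl⟩ : ∃ K, k = K + 1 := ⟨k - 1, by omega⟩
  set k := K + 1 with hkdef
  -- split the k-stretch sum
  have hsplit : (∑ g ∈ Icc 1 (p - 1), stretchEntry n k g)
      + (∑ g ∈ Icc p (2 * n), stretchEntry n k g)
      = ∑ g ∈ Icc 1 (2 * n), stretchEntry n k g := by
    have i1 : Icc 1 (p - 1) = Ico 1 p := by rw [← Finset.Ico_add_one_right_eq_Icc]; congr 1; omega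
    have i2 : Icc p (2 * n) = Ico p (2 * n + 1) := (Finset.Ico_add_one_right_eq_Icc _ _).symm
    have i3 : Icc 1 (2 * n) = Ico 1 (2 * n + 1) := (Finset.Ico_add_one_right_eq_Icc _ _).symm
    rw [i1, i2, i3]
    exact Finset.sum_Ico_consecutive _ (by omega) (by omega)
  have hsuf : ∑ g ∈ Icc p (2 * n), stretchEntry n k g
      = ((1 : ZMod n), (0 : ZMod n))
        - ((((p - 1) / 2 * (2 * k - 1) : ℕ) : ZMod n), ((p / 2 * (2 * k - 1) : ℕ) : ZMod n)) := by
    have h1 := eq_sub_of_add_eq' hsplit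
    rw [sum_stretch_full n k (by omega) (by omega),
      sum_stretch_prefix n k (p - 1) (by omega)] at h1
    have hpp : p - 1 + 1 = p := by omega
    rw [hpp] at h1
    exact h1
  rw [hsuf, sum_stretch_prefix n (k + 1 + m) q (by omega)]
  intro hcon
  have h1 := congrArg Prod.fst hcon
  have h2 := congrArg Prod.snd hcon
  simp only [Prod.fst_add, Prod.fst_sub, Prod.snd_add, Prod.snd_sub, Prod.fst_zero,
    Prod.snd_zero] at h1 h2
  have ha : 2 * k - 1 = 2 * K + 1 := by omega
  have hb : 2 * (k + 1 + m) - 1 = 2 * K + 2 * m + 3 := by omega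
  rw [ha, hb] at h1 h2
  have hbound : 2 * K + m + 2 < n ∧ m + 1 < n := by omega
  rcases Nat.even_or_odd p with ⟨s, hp⟩ | ⟨s, hp⟩
  · -- p = 2s (write as 2s', s = s'): p even, p ≥ 1 so p = 2s with s ≥ 1; use p = 2*(s-1)+2
    obtain ⟨s', rfl⟩ : ∃ s', s = s' + 1 := ⟨s - 1, by omega⟩
    have e1 : (p - 1) / 2 = s' := by omega
    have e2 : p / 2 = s' + 1 := by omega
    rw [e1] at h1; rw [e2] at h2
    rcases Nat.even_or_odd q with ⟨t, hq⟩ | ⟨t, hq⟩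
    · -- q even: key is 2K + m + 2
      obtain ⟨t', rfl⟩ : ∃ t', t = t' + 1 := ⟨t - 1, by omega⟩
      have f1 : q / 2 = t' + 1 := by omega
      have f2 : (q + 1) / 2 = t' + 1 := by omega
      rw [f1] at h1; rw [f2] at h2
      have key : ((2 * K + m + 2 : ℕ) : ZMod n) = 0 := by
        push_cast at h1 h2 ⊢
        linear_combination h1 - h2
      rw [ZMod.natCast_eq_zero_iff] at key
      have := Nat.le_of_dvd (by omega) key
      omega
    · -- q odd: key is m + 1
      have f1 : q / 2 = t := by omega
      have f2 : (q + 1) / 2 = t + 1 := by omega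
      rw [f1] at h1; rw [f2] at h2
      have key : ((m + 1 : ℕ) : ZMod n) = 0 := by
        push_cast at h1 h2 ⊢
        linear_combination h2 - h1
      rw [ZMod.natCast_eq_zero_iff] at key
      have := Nat.le_of_dvd (by omega) key
      omega
  · -- p odd: p = 2s+1
    have e1 : (p - 1) / 2 = s := by omega
    have e2 : p / 2 = s := by omega
    rw [e1] at h1; rw [e2] at h2
    rcases Nat.even_or_odd q with ⟨t, hq⟩ | ⟨t, hq⟩
    · -- q even: key m + 1
      obtain ⟨t', rfl⟩ : ∃ t', t = t' + 1 := ⟨t - 1, by omega⟩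
      have f1 : q / 2 = t' + 1 := by omega
      have f2 : (q + 1) / 2 = t' + 1 := by omega
      rw [f1] at h1; rw [f2] at h2
      have key : ((m + 1 : ℕ) : ZMod n) = 0 := by
        push_cast at h1 h2 ⊢
        linear_combination h1 - h2
      rw [ZMod.natCast_eq_zero_iff] at key
      have := Nat.le_of_dvd (by omega) key
      omega
    · -- q odd: key 2K + m + 2
      have f1 : q / 2 = t := by omega
      have f2 : (q + 1) / 2 = t + 1 := by omega
      rw [f1] at h1; rw [f2] at h2
      have key : ((2 * K + m + 2 : ℕ) : ZMod n) = 0 := by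
        push_cast at h1 h2 ⊢
        linear_combination h2 - h1
      rw [ZMod.natCast_eq_zero_iff] at key
      have := Nat.le_of_dvd (by omega) key
      omega
end
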